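/- Behavioural congruence of closed PGA terms is a congruence with respect to concatenation: if t₁ ≅ t₁' and t₂ ≅ t₂' then t₁ ; t₂ ≅ t₁' ; t₂', where ≅ is defined by t ≅ t' iff for all l, n ∈ ℕ, #l ; t ; !ⁿ is behaviourally equivalent to #l ; t' ; !ⁿ. -/

import Mathlib

/-- Primitive instructions over a set `A` of basic instructions. -/
inductive PInstr (A : Type) where
  | basic : A → PInstr A
  | ptst : A → PInstr A
  | ntst : A → PInstr A
  | jmp : ℕ → PInstr A
  | halt : PInstr A

open PInstr

/-- Closed PGA instruction-sequence terms: primitive instruction constants,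
concatenation `;`, and repetition `^ω`. -/
inductive ISTm (A : Type) where
  | ins : PInstr A → ISTm A
  | seq : ISTm A → ISTm A → ISTm A
  | rep : ISTm A → ISTm A

/-- `pw t n` is `t^{n+1}`: `t^1 = t`, `t^{n+1} = t ; t^n`. -/
def ISTm.pw {A : Type} (t : ISTm A) : ℕ → ISTm A
  | 0 => t
  | n + 1 => .seq t (t.pw n)

/-- `cat us t` is the term `u₁ ; ⋯ ; uₖ ; t` (right-associated). -/
def ISTm.cat {A : Type} : List (PInstr A) → ISTm A → ISTm A
  | [], t => t
  | u :: us, t => .seq (.ins u) (ISTm.cat us t)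

/-- `nel u us` is the right-associated term of the non-empty instruction
list `u :: us`. -/
def ISTm.nel {A : Type} : PInstr A → List (PInstr A) → ISTm A
  | u, [] => .ins u
  | u, v :: vs => .seq (.ins u) (ISTm.nel v vs)

/-- Equational derivability from the structural congruence axioms
PGA1–PGA8. -/
inductive EqI {A : Type} : ISTm A → ISTm A → Prop where
  | refl (t) : EqI t t
  | symm {t t'} : EqI t t' → EqI t' t
  | trans {t t' t''} : EqI t t' → EqI t' t'' → EqI t t''
  | seqCongr {s s' t t'} : EqI s s' → EqI t t' → EqI (.seq s t) (.seq s' t')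
  | repCongr {t t'} : EqI t t' → EqI (.rep t) (.rep t')
  | pga1 (x y z) : EqI (.seq (.seq x y) z) (.seq x (.seq y z))
  | pga2 (x) (n : ℕ) : EqI (.rep (x.pw n)) (.rep x)
  | pga3 (x y) : EqI (.seq (.rep x) y) (.rep x)
  | pga4 (x y) : EqI (.rep (.seq x y)) (.seq x (.rep (.seq y x)))
  | pga5 (us : List (PInstr A)) :
      EqI (.cat (jmp (us.length + 1) :: us) (.ins (jmp 0)))
        (.cat (jmp 0 :: us) (.ins (jmp 0)))
  | pga6 (us : List (PInstr A)) (l : ℕ) :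
      EqI (.cat (jmp (us.length + 1) :: us) (.ins (jmp l)))
        (.cat (jmp (l + us.length + 1) :: us) (.ins (jmp l)))
  | pga7 (us : List (PInstr A)) (l : ℕ) :
      EqI (.rep (.nel (jmp (l + us.length + 1)) us))
        (.rep (.nel (jmp l) us))
  | pga8 (us : List (PInstr A)) (v : PInstr A) (vs : List (PInstr A)) (l : ℕ) :
      EqI (.cat (jmp (l + us.length + vs.length + 2) :: us) (.rep (.nel v vs)))
        (.cat (jmp (l + us.length + 1) :: us) (.rep (.nel v vs)))

/-- Thread terms of the combination of PGA with BTA with projections: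
inaction `D`, termination `S`, postconditional composition, projections,
and thread extraction applied to instruction-sequence terms. -/
inductive TT (A : Type) where
  | D : TT A
  | S : TT A
  | pcc : TT A → A → TT A → TT A
  | proj : ℕ → TT A → TT A
  | extr : ISTm A → TT A

/-- Derivable equality of thread terms from TE1–TE13, PR1–PR4, AIP, and
the structural congruence axioms PGA1–PGA8 (lifted through thread
extraction). -/
inductive EqT {A : Type} : TT A → TT A → Prop where
  | refl (x) : EqT x x
  | symm {x y} : EqT x y → EqT y x
  | trans {x y z} : EqT x y → EqT y z → EqT x z
  | pccCongr {x x' y y'} (a : A) : EqT x x' → EqT y y' →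
      EqT (.pcc x a y) (.pcc x' a y')
  | projCongr (n : ℕ) {x y} : EqT x y → EqT (.proj n x) (.proj n y)
  | extrCongr {t t' : ISTm A} : EqI t t' → EqT (.extr t) (.extr t')
  | te1 (a : A) : EqT (.extr (.ins (basic a))) (.pcc .D a .D)
  | te2 (a : A) (X : ISTm A) :
      EqT (.extr (.seq (.ins (basic a)) X)) (.pcc (.extr X) a (.extr X))
  | te3 (a : A) : EqT (.extr (.ins (ptst a))) (.pcc .D a .D)
  | te4 (a : A) (X : ISTm A) :
      EqT (.extr (.seq (.ins (ptst a)) X))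
        (.pcc (.extr X) a (.extr (.seq (.ins (jmp 2)) X)))
  | te5 (a : A) : EqT (.extr (.ins (ntst a))) (.pcc .D a .D)
  | te6 (a : A) (X : ISTm A) :
      EqT (.extr (.seq (.ins (ntst a)) X))
        (.pcc (.extr (.seq (.ins (jmp 2)) X)) a (.extr X))
  | te7 (l : ℕ) : EqT (.extr (.ins (jmp l) : ISTm A)) .D
  | te8 (X : ISTm A) : EqT (.extr (.seq (.ins (jmp 0)) X)) .D
  | te9 (X : ISTm A) : EqT (.extr (.seq (.ins (jmp 1)) X)) (.extr X)
  | te10 (l : ℕ) (u : PInstr A) :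
      EqT (.extr (.seq (.ins (jmp (l + 2))) (.ins u))) .D
  | te11 (l : ℕ) (u : PInstr A) (X : ISTm A) :
      EqT (.extr (.seq (.ins (jmp (l + 2))) (.seq (.ins u) X)))
        (.extr (.seq (.ins (jmp (l + 1))) X))
  | te12 : EqT (.extr (.ins (halt : PInstr A))) .S
  | te13 (X : ISTm A) : EqT (.extr (.seq (.ins halt) X)) .S
  | pr1 (x : TT A) : EqT (.proj 0 x) .D
  | pr2 (n : ℕ) : EqT (.proj (n + 1) (.D : TT A)) .D
  | pr3 (n : ℕ) : EqT (.proj (n + 1) (.S : TT A)) .S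
  | pr4 (n : ℕ) (x y : TT A) (a : A) :
      EqT (.proj (n + 1) (.pcc x a y)) (.pcc (.proj n x) a (.proj n y))
  | aip {x y : TT A} : (∀ n : ℕ, EqT (.proj n x) (.proj n y)) → EqT x y

/-- `halts n` is `!^{n+1}`. -/
def halts {A : Type} : ℕ → ISTm A
  | 0 => .ins halt
  | n + 1 => .seq (.ins halt) (halts n)

/-- `appHalts t n` is `t ; !ⁿ`, with `t ; !⁰ = t`. -/
def appHalts {A : Type} (t : ISTm A) : ℕ → ISTm A
  | 0 => t
  | n + 1 => .seq t (halts n)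

/-- Behavioural equivalence: the threads extracted from the two terms are
derivably equal. -/
def BEqv {A : Type} (t t' : ISTm A) : Prop := EqT (.extr t) (.extr t')

/-- Behavioural congruence: `t ≅ t'` iff for all `l, n ∈ ℕ`,
`#l ; t ; !ⁿ ≈ #l ; t' ; !ⁿ`. -/
def BCong {A : Type} (t t' : ISTm A) : Prop :=
  ∀ l n : ℕ, BEqv (.seq (.ins (jmp l)) (appHalts t n))
    (.seq (.ins (jmp l)) (appHalts t' n))


/- ===================== Auxiliary development ===================== -/
namespace PGAAux

open PInstr

variable {A : Type}

/-- Finite-depth thread approximations. -/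
inductive FT (A : Type) where
  | D : FT A
  | S : FT A
  | pcc : FT A → A → FT A → FT A

/-- Instruction streams. -/
abbrev St (A : Type) := ℕ → Option (PInstr A)

def pre (L : List (PInstr A)) (τ : St A) : St A :=
  fun n => if n < L.length then L[n]? else τ (n - L.length)

def cyc (L : List (PInstr A)) : St A := fun n => L[n % L.length]?

def toL : ISTm A → Option (List (PInstr A))
  | .ins u => some [u]
  | .seq s t =>
    match toL s with
    | none => none
    | some L => match toL t with
      | none => none
      | some M => some (L ++ M)
  | .rep _ => none

def inst : ISTm A → St A
  | .ins u => fun n => if n = 0 then some u else none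
  | .seq s t =>
    match toL s with
    | none => inst s
    | some L => pre L (inst t)
  | .rep t =>
    match toL t with
    | none => inst t
    | some L => cyc L

def app (t : ISTm A) (τ : St A) : St A :=
  match toL t with
  | none => inst t
  | some L => pre L τ

lemma pre_lt {L : List (PInstr A)} {τ n} (h : n < L.length) : pre L τ n = L[n]? := by
  simp [pre, h]

lemma pre_ge {L : List (PInstr A)} {τ n} (h : L.length ≤ n) :
    pre L τ n = τ (n - L.length) := by
  simp [pre, Nat.not_lt.mpr h]

lemma pre_append (L M : List (PInstr A)) (τ : St A) (n : ℕ) :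
    pre (L ++ M) τ n = pre L (pre M τ) n := by
  rcases Nat.lt_or_ge n L.length with h | h
  · rw [pre_lt (by simp; omega), pre_lt h, List.getElem?_append_left h]
  · rw [pre_ge h]
    rcases Nat.lt_or_ge (n - L.length) M.length with h2 | h2
    · rw [pre_lt h2, pre_lt (by simp; omega), List.getElem?_append_right h]
    · rw [pre_ge h2, pre_ge (by simp; omega)]
      simp [Nat.sub_sub]

lemma pre_nil (τ : St A) (n : ℕ) : pre ([] : List (PInstr A)) τ n = τ n := by
  simp [pre]

lemma pre_cons (u : PInstr A) (L : List (PInstr A)) (τ : St A) (n : ℕ) :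
    pre (u :: L) τ n = (match n with | 0 => some u | m+1 => pre L τ m) := by
  match n with
  | 0 => simp [pre]
  | m+1 =>
    show pre (u :: L) τ (m+1) = pre L τ m
    unfold pre
    simp only [List.length_cons, Nat.add_lt_add_iff_right, List.getElem?_cons_succ,
      Nat.succ_sub_succ]

lemma toL_ne_nil {t : ISTm A} {L} (h : toL t = some L) : L ≠ [] := by
  induction t generalizing L with
  | ins u => simp [toL] at h; subst h; simp
  | seq s t ihs iht =>
    unfold toL at h
    revert h
    cases hs : toL s with
    | none => simp
    | some Ls =>
      cases ht : toL t with
      | none => simp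
      | some Lt =>
        intro h
        simp at h
        subst h
        have := ihs hs
        simp [this]
  | rep t ih => simp [toL] at h

lemma inst_seq_fin {s t : ISTm A} {L} (h : toL s = some L) :
    inst (ISTm.seq s t) = pre L (inst t) := by
  show (match toL s with | none => inst s | some L => pre L (inst t)) = _
  rw [h]

lemma inst_seq_inf {s t : ISTm A} (h : toL s = none) :
    inst (ISTm.seq s t) = inst s := by
  show (match toL s with | none => inst s | some L => pre L (inst t)) = _
  rw [h]

lemma inst_rep_fin {t : ISTm A} {L} (h : toL t = some L) :
    inst (ISTm.rep t) = cyc L := by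
  show (match toL t with | none => inst t | some L => cyc L) = _
  rw [h]

lemma inst_rep_inf {t : ISTm A} (h : toL t = none) :
    inst (ISTm.rep t) = inst t := by
  show (match toL t with | none => inst t | some L => cyc L) = _
  rw [h]

lemma instFin {t : ISTm A} {L} (h : toL t = some L) : ∀ n, inst t n = L[n]? := by
  induction t generalizing L with
  | ins u =>
    simp [toL] at h; subst h
    intro n; cases n <;> simp [inst]
  | seq s t ihs iht =>
    unfold toL at h
    revert h
    cases hs : toL s with
    | none => simp
    | some Ls =>
      cases ht : toL t with
      | none => simp
      | some Lt =>
        intro h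
        simp at h
        subst h
        intro n
        rw [inst_seq_fin hs]
        rcases Nat.lt_or_ge n Ls.length with h2 | h2
        · rw [pre_lt h2, List.getElem?_append_left h2]
        · rw [pre_ge h2, iht ht, List.getElem?_append_right h2]
  | rep t ih => simp [toL] at h

lemma app_fin {t : ISTm A} {L} (h : toL t = some L) (τ : St A) :
    app t τ = pre L τ := by
  unfold app; rw [h]

lemma app_inf {t : ISTm A} (h : toL t = none) (τ : St A) :
    app t τ = inst t := by
  unfold app; rw [h]

lemma app_bot {t : ISTm A} : app t (fun _ => none) = inst t := by
  cases h : toL t with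
  | none => exact app_inf h _
  | some L =>
    rw [app_fin h]
    funext n
    rw [instFin h]
    rcases Nat.lt_or_ge n L.length with h2 | h2
    · rw [pre_lt h2]
    · rw [pre_ge h2, eq_comm, List.getElem?_eq_none h2]

/- ===================== Jump chains and extraction ===================== -/

def stepJ (ι : St A) (p : ℕ) : Option ℕ :=
  match ι p with
  | some (jmp (k+1)) => some (p + (k+1))
  | _ => none

inductive Steps (ι : St A) : ℕ → ℕ → Prop
  | refl (p) : Steps ι p p
  | tail {p q r} : stepJ ι p = some q → Steps ι q r → Steps ι p r

def Halted (ι : St A) (p : ℕ) : Prop := stepJ ι p = none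

def Res (ι : St A) (p q : ℕ) : Prop := Steps ι p q ∧ Halted ι q

lemma stepJ_some {ι : St A} {p q} (h : stepJ ι p = some q) :
    ∃ k, ι p = some (jmp (k+1)) ∧ q = p + (k+1) := by
  unfold stepJ at h
  revert h
  cases hp : ι p with
  | none => simp
  | some u =>
    cases u with
    | jmp k =>
      cases k with
      | zero => simp
      | succ k => intro h; simp at h; exact ⟨k, rfl, h.symm⟩
    | basic a => simp
    | ptst a => simp
    | ntst a => simp
    | halt => simp

lemma steps_mono {ι : St A} {p q} (h : Steps ι p q) : p ≤ q := by
  induction h with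
  | refl => omega
  | tail hs _ ih =>
    obtain ⟨k, _, rfl⟩ := stepJ_some hs
    omega

lemma steps_unique {ι : St A} {p q q'} (h : Steps ι p q) (hh : Halted ι q)
    (h' : Steps ι p q') (hh' : Halted ι q') : q = q' := by
  induction h with
  | refl =>
    cases h' with
    | refl => rfl
    | tail hs _ => rw [Halted] at hh; rw [hh] at hs; exact absurd hs (by simp)
  | tail hs _ ih =>
    cases h' with
    | refl => rw [Halted] at hh'; rw [hh'] at hs; exact absurd hs (by simp)
    | tail hs' hsteps' =>
      rw [hs] at hs'
      injection hs' with e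
      subst e
      exact ih hh hsteps'

open Classical in
noncomputable def resolve (ι : St A) (p : ℕ) : Option ℕ :=
  if h : ∃ q, Res ι p q then some (Classical.choose h) else none

lemma resolve_eq {ι : St A} {p q} (h : Res ι p q) : resolve ι p = some q := by
  rw [resolve, dif_pos ⟨q, h⟩]
  have hs := Classical.choose_spec (⟨q, h⟩ : ∃ q, Res ι p q)
  exact congrArg some (steps_unique hs.1 hs.2 h.1 h.2)

lemma resolve_none {ι : St A} {p} (h : ¬ ∃ q, Res ι p q) : resolve ι p = none := by
  rw [resolve, dif_neg h]

def extHead (ι : St A) (go : ℕ → FT A) (q : ℕ) : FT A :=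
  match ι q with
  | some (basic a) => .pcc (go (q+1)) a (go (q+1))
  | some (ptst a) => .pcc (go (q+1)) a (go (q+2))
  | some (ntst a) => .pcc (go (q+2)) a (go (q+1))
  | some PInstr.halt => .S
  | _ => .D

noncomputable def extT (ι : St A) : ℕ → ℕ → FT A
  | 0, _ => .D
  | d+1, p =>
    match resolve ι p with
    | none => .D
    | some q => extHead ι (extT ι d) q

lemma extT_succ_none {ι : St A} {p d} (h : resolve ι p = none) :
    extT ι (d+1) p = .D := by
  unfold extT; rw [h]

lemma extT_succ_some {ι : St A} {p d q} (h : resolve ι p = some q) :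
    extT ι (d+1) p = extHead ι (extT ι d) q := by
  unfold extT; rw [h]

lemma extHead_none {ι : St A} {q} (go) (h : ι q = none) : extHead ι go q = .D := by
  unfold extHead; rw [h]

lemma extHead_jmp {ι : St A} {q k} (go) (h : ι q = some (jmp k)) : extHead ι go q = .D := by
  unfold extHead; rw [h]

lemma extHead_basic {ι : St A} {q a} (go) (h : ι q = some (basic a)) :
    extHead ι go q = .pcc (go (q+1)) a (go (q+1)) := by
  unfold extHead; rw [h]

lemma extHead_ptst {ι : St A} {q a} (go) (h : ι q = some (ptst a)) :
    extHead ι go q = .pcc (go (q+1)) a (go (q+2)) := by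
  unfold extHead; rw [h]

lemma extHead_ntst {ι : St A} {q a} (go) (h : ι q = some (ntst a)) :
    extHead ι go q = .pcc (go (q+2)) a (go (q+1)) := by
  unfold extHead; rw [h]

lemma extHead_halt {ι : St A} {q} (go) (h : ι q = some PInstr.halt) :
    extHead ι go q = .S := by
  unfold extHead; rw [h]

end PGAAux

namespace PGAAux
open PInstr
variable {A : Type}

lemma stepJ_congr {ι ι' : St A} {p} (h : ι p = ι' p) : stepJ ι p = stepJ ι' p := by
  unfold stepJ; rw [h]

lemma halted_none {ι : St A} {p} (h : ι p = none) : Halted ι p := by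
  unfold Halted stepJ; rw [h]

lemma halted_jmp0 {ι : St A} {p} (h : ι p = some (jmp 0)) : Halted ι p := by
  unfold Halted stepJ; rw [h]

lemma halted_nonjump {ι : St A} {p u} (h : ι p = some u) (hnj : ∀ k, u ≠ jmp k) :
    Halted ι p := by
  unfold Halted stepJ; rw [h]
  cases u with
  | jmp k => exact absurd rfl (hnj k)
  | basic a => rfl
  | ptst a => rfl
  | ntst a => rfl
  | halt => rfl

lemma stepJ_jmp {ι : St A} {p k} (h : ι p = some (jmp (k+1))) :
    stepJ ι p = some (p + (k+1)) := by
  unfold stepJ; rw [h]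

lemma res_step {ι : St A} {p p'} (h : stepJ ι p = some p') (q : ℕ) :
    Res ι p q ↔ Res ι p' q := by
  constructor
  · rintro ⟨hs, hh⟩
    cases hs with
    | refl => rw [Halted] at hh; rw [hh] at h; exact absurd h (by simp)
    | tail h2 hs2 =>
      rw [h] at h2; injection h2 with e; subst e; exact ⟨hs2, hh⟩
  · rintro ⟨hs, hh⟩
    exact ⟨Steps.tail h hs, hh⟩

lemma resolve_some {ι : St A} {p q} (h : resolve ι p = some q) : Res ι p q := by
  unfold resolve at h
  split at h
  · injection h with e
    subst e
    exact Classical.choose_spec ‹∃ q, Res ι p q›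
  · exact absurd h (by simp)

lemma resolve_step {ι : St A} {p p'} (h : stepJ ι p = some p') :
    resolve ι p = resolve ι p' := by
  by_cases hex : ∃ q, Res ι p' q
  · obtain ⟨q, hq⟩ := hex
    rw [resolve_eq hq, resolve_eq ((res_step h q).mpr hq)]
  · rw [resolve_none hex, resolve_none (fun ⟨q, hq⟩ => hex ⟨q, (res_step h q).mp hq⟩)]

lemma extT_step {ι : St A} {p p'} (h : stepJ ι p = some p') (d : ℕ) :
    extT ι d p = extT ι d p' := by
  cases d with
  | zero => rfl
  | succ d =>
    cases hr : resolve ι p' with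
    | none => rw [extT_succ_none hr, extT_succ_none ((resolve_step h).trans hr)]
    | some q => rw [extT_succ_some hr, extT_succ_some ((resolve_step h).trans hr)]

lemma extT_steps {ι : St A} {p r} (h : Steps ι p r) (d : ℕ) :
    extT ι d p = extT ι d r := by
  induction h with
  | refl => rfl
  | tail hs _ ih => rw [extT_step hs, ih]

lemma steps_agree {ι ι' : St A} : ∀ {p r}, Steps ι p r →
    (∀ q, p ≤ q → ι q = ι' q) → Steps ι' p r := by
  intro p r h
  induction h with
  | refl => intro _; exact Steps.refl _
  | @tail p q r hs hsteps ih =>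
    intro hagr
    have hq : p ≤ q := by
      obtain ⟨k, _, rfl⟩ := stepJ_some hs
      omega
    refine Steps.tail ?_ (ih (fun x hx => hagr x (le_trans hq hx)))
    rw [← stepJ_congr (hagr p le_rfl)]
    exact hs

lemma res_agree {ι ι' : St A} {p r} (h : Res ι p r)
    (hagr : ∀ q, p ≤ q → ι q = ι' q) : Res ι' p r := by
  refine ⟨steps_agree h.1 hagr, ?_⟩
  have := h.2
  unfold Halted at this ⊢
  rw [← stepJ_congr (hagr r (steps_mono h.1))]
  exact this

lemma extT_agree {ι ι' : St A} : ∀ (d : ℕ) (p : ℕ),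
    (∀ q, p ≤ q → ι q = ι' q) → extT ι d p = extT ι' d p := by
  intro d
  induction d with
  | zero => intro _ _; rfl
  | succ d ih =>
    intro p hagr
    have hres : resolve ι p = resolve ι' p := by
      by_cases hex : ∃ q, Res ι p q
      · obtain ⟨q, hq⟩ := hex
        rw [resolve_eq hq, resolve_eq (res_agree hq hagr)]
      · rw [resolve_none hex, resolve_none (fun ⟨q, hq⟩ => hex
          ⟨q, res_agree hq (fun x hx => (hagr x hx).symm)⟩)]
    cases hr : resolve ι p with
    | none => rw [extT_succ_none hr, extT_succ_none (hres ▸ hr)]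
    | some q =>
      rw [extT_succ_some hr, extT_succ_some (hres ▸ hr)]
      have hq : p ≤ q := steps_mono (resolve_some hr).1
      have hiq := hagr q hq
      have h1 : ∀ j, extT ι d (q + j) = extT ι' d (q + j) := fun j =>
        ih (q + j) (fun x hx => hagr x (by omega))
      cases hu : ι q with
      | none => rw [extHead_none _ hu, extHead_none _ (hiq ▸ hu)]
      | some u =>
        cases u with
        | basic a => rw [extHead_basic _ hu, extHead_basic _ (hiq ▸ hu), h1 1]
        | ptst a => rw [extHead_ptst _ hu, extHead_ptst _ (hiq ▸ hu), h1 1, h1 2]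
        | ntst a => rw [extHead_ntst _ hu, extHead_ntst _ (hiq ▸ hu), h1 1, h1 2]
        | jmp k => rw [extHead_jmp _ hu, extHead_jmp _ (hiq ▸ hu)]
        | halt => rw [extHead_halt _ hu, extHead_halt _ (hiq ▸ hu)]

/-- shifted stream -/
def shf (ι : St A) (k : ℕ) : St A := fun n => ι (n + k)

lemma stepJ_shf_none {ι : St A} {k p} :
    stepJ (shf ι k) p = none ↔ stepJ ι (p + k) = none := by
  unfold stepJ shf
  cases h : ι (p + k) with
  | none => simp
  | some u => cases u with
    | jmp j => cases j <;> simp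
    | basic a => simp
    | ptst a => simp
    | ntst a => simp
    | halt => simp

lemma stepJ_shf_some {ι : St A} {k p x} :
    stepJ (shf ι k) p = some x ↔ stepJ ι (p + k) = some (x + k) := by
  unfold stepJ shf
  cases h : ι (p + k) with
  | none => simp
  | some u => cases u with
    | jmp j =>
      cases j with
      | zero => simp
      | succ j => simp; omega
    | basic a => simp
    | ptst a => simp
    | ntst a => simp
    | halt => simp

lemma steps_shf₁ {ι : St A} {k} : ∀ {p q}, Steps (shf ι k) p q → Steps ι (p + k) (q + k) := by
  intro p q h
  induction h with
  | refl => exact Steps.refl _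
  | tail hs _ ih => exact Steps.tail (stepJ_shf_some.mp hs) ih

lemma steps_shf₂ {ι : St A} {k} : ∀ {x r}, Steps ι x r → ∀ p, x = p + k →
    ∃ q, r = q + k ∧ Steps (shf ι k) p q := by
  intro x r h
  induction h with
  | refl => exact fun p hp => ⟨p, hp, Steps.refl _⟩
  | @tail x x₁ r hs hsteps ih =>
    intro p hp
    subst hp
    obtain ⟨j, hj, rfl⟩ := stepJ_some hs
    have hx1 : p + k + (j+1) = (p + (j+1)) + k := by omega
    obtain ⟨q, hq, hst⟩ := ih (p + (j+1)) hx1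
    refine ⟨q, hq, Steps.tail ?_ hst⟩
    rw [stepJ_shf_some]
    rw [← hx1]
    exact hs

lemma res_shf {ι : St A} {k p q} : Res (shf ι k) p q ↔ Res ι (p + k) (q + k) := by
  constructor
  · rintro ⟨hs, hh⟩
    exact ⟨steps_shf₁ hs, by rwa [Halted, ← stepJ_shf_none]⟩
  · rintro ⟨hs, hh⟩
    obtain ⟨q', hq', hst⟩ := steps_shf₂ hs p rfl
    have : q' = q := by omega
    subst this
    exact ⟨hst, by rwa [Halted, stepJ_shf_none]⟩

lemma extT_shf {ι : St A} {k} : ∀ (d p : ℕ), extT ι d (p + k) = extT (shf ι k) d p := by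
  intro d
  induction d with
  | zero => intro _; rfl
  | succ d ih =>
    intro p
    have hres : resolve (shf ι k) p = (resolve ι (p + k)).map (fun x => x - k) := by
      cases hr : resolve ι (p + k) with
      | none =>
        simp only [Option.map_none]
        refine resolve_none ?_
        rintro ⟨q, hq⟩
        have := resolve_eq (res_shf.mp hq)
        rw [hr] at this
        exact absurd this (by simp)
      | some q =>
        have hq := resolve_some hr
        have hk : p + k ≤ q := steps_mono hq.1
        have : q = (q - k) + k := by omega
        rw [this] at hq
        simp only [Option.map_some]
        exact resolve_eq (res_shf.mpr hq)
    cases hr : resolve ι (p + k) with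
    | none =>
      rw [extT_succ_none hr, extT_succ_none (by rw [hres, hr]; rfl)]
    | some q =>
      have hk : p + k ≤ q := steps_mono (resolve_some hr).1
      rw [extT_succ_some hr, extT_succ_some (ι := shf ι k)
        (by rw [hres, hr]; rfl)]
      have hiq : (shf ι k) (q - k) = ι q := by
        unfold shf; congr 1; omega
      have h1 : ∀ j, extT ι d (q + j) = extT (shf ι k) d ((q - k) + j) := by
        intro j
        have : q + j = ((q - k) + j) + k := by omega
        rw [this, ih]
      cases hu : ι q with
      | none => rw [extHead_none _ hu, extHead_none _ (hiq.trans hu)]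
      | some u =>
        cases u with
        | basic a => rw [extHead_basic _ hu, extHead_basic _ (hiq.trans hu), h1 1]
        | ptst a => rw [extHead_ptst _ hu, extHead_ptst _ (hiq.trans hu), h1 1, h1 2]
        | ntst a => rw [extHead_ntst _ hu, extHead_ntst _ (hiq.trans hu), h1 1, h1 2]
        | jmp j => rw [extHead_jmp _ hu, extHead_jmp _ (hiq.trans hu)]
        | halt => rw [extHead_halt _ hu, extHead_halt _ (hiq.trans hu)]

lemma extT_none {ι : St A} {p} (h : ι p = none) (d : ℕ) : extT ι d p = .D := by
  cases d with
  | zero => rfl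
  | succ d =>
    rw [extT_succ_some (resolve_eq ⟨Steps.refl p, halted_none h⟩), extHead_none _ h]

lemma extT_jmp0 {ι : St A} {p} (h : ι p = some (jmp 0)) (d : ℕ) : extT ι d p = .D := by
  cases d with
  | zero => rfl
  | succ d =>
    rw [extT_succ_some (resolve_eq ⟨Steps.refl p, halted_jmp0 h⟩), extHead_jmp _ h]

lemma extT_nores {ι : St A} {p} (h : ¬ ∃ q, Res ι p q) (d : ℕ) : extT ι d p = .D := by
  cases d with
  | zero => rfl
  | succ d =>
    rw [extT_succ_none (resolve_none h)]

lemma extT_jmpstep {ι : St A} {p k} (h : ι p = some (jmp (k+1))) (d : ℕ) :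
    extT ι d p = extT ι d (p + (k+1)) :=
  extT_step (stepJ_jmp h) d

lemma extT_jmpstep0 {ι : St A} {k} (h : ι 0 = some (jmp (k+1))) (d : ℕ) :
    extT ι d 0 = extT ι d (k+1) := by
  have h2 := extT_step (stepJ_jmp h) d
  rwa [Nat.zero_add] at h2

lemma extT_fun_congr {ι ι' : St A} (h : ∀ n, ι n = ι' n) (d p : ℕ) :
    extT ι d p = extT ι' d p := by
  have : ι = ι' := funext h
  rw [this]

lemma extT_period {ι : St A} {b c : ℕ} (hper : ∀ n, b ≤ n → ι (n + c) = ι n)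
    {p} (hp : b ≤ p) (d : ℕ) : extT ι d (p + c) = extT ι d p := by
  rw [extT_shf]
  exact (extT_agree d p (fun q hq => (hper q (le_trans hp hq)).symm)).symm

end PGAAux

namespace PGAAux
open PInstr
variable {A : Type}

/-- Matching condition for the bisimulation lemma. -/
def MatH (ι₁ ι₂ : St A) (R : ℕ → ℕ → Prop) : Prop :=
  ∀ p q, R p q →
    (∀ d, extT ι₁ d p = extT ι₂ d q) ∨
    ((ι₁ p = none ∧ ι₂ q = none) ∨
     (∃ u, ι₁ p = some u ∧ ι₂ q = some u ∧ (∀ k, u ≠ jmp k) ∧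
        R (p+1) (q+1) ∧ R (p+2) (q+2)) ∨
     (ι₁ p = some (jmp 0) ∧ ι₂ q = some (jmp 0)) ∨
     (∃ j₁ j₂, ι₁ p = some (jmp (j₁+1)) ∧ ι₂ q = some (jmp (j₂+1)) ∧
        R (p+(j₁+1)) (q+(j₂+1))))

lemma matH_symm {ι₁ ι₂ : St A} {R} (h : MatH ι₁ ι₂ R) :
    MatH ι₂ ι₁ (fun p q => R q p) := by
  intro p q hR
  rcases h q p hR with he | hm
  · exact Or.inl (fun d => (he d).symm)
  · right
    rcases hm with ⟨h1, h2⟩ | ⟨u, h1, h2, h3, h4, h5⟩ | ⟨h1, h2⟩ | ⟨j₁, j₂, h1, h2, h3⟩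
    · exact Or.inl ⟨h2, h1⟩
    · exact Or.inr (Or.inl ⟨u, h2, h1, h3, h4, h5⟩)
    · exact Or.inr (Or.inr (Or.inl ⟨h2, h1⟩))
    · exact Or.inr (Or.inr (Or.inr ⟨j₂, j₁, h2, h1, h3⟩))

/-- chain transport -/
lemma matH_trans {ι₁ ι₂ : St A} {R} (H : MatH ι₁ ι₂ R) :
    ∀ {p r}, Steps ι₁ p r → Halted ι₁ r → ∀ q, R p q →
    (∃ p' q', Steps ι₁ p p' ∧ Steps ι₂ q q' ∧ (∀ d, extT ι₁ d p' = extT ι₂ d q')) ∨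
    (∃ r', Steps ι₂ q r' ∧ Halted ι₂ r' ∧ R r r') := by
  intro p r hst
  induction hst with
  | refl p =>
    intro hh q hR
    rcases H p q hR with he | hm
    · exact Or.inl ⟨p, q, Steps.refl _, Steps.refl _, he⟩
    · rcases hm with ⟨h1, h2⟩ | ⟨u, h1, h2, h3, _, _⟩ | ⟨h1, h2⟩ | ⟨j₁, j₂, h1, h2, h3⟩
      · exact Or.inr ⟨q, Steps.refl _, halted_none h2, hR⟩
      · exact Or.inr ⟨q, Steps.refl _, halted_nonjump h2 h3, hR⟩
      · exact Or.inr ⟨q, Steps.refl _, halted_jmp0 h2, hR⟩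
      · unfold Halted at hh
        rw [stepJ_jmp h1] at hh
        exact absurd hh (by simp)
  | @tail p p₁ r hs _ ih =>
    intro hh q hR
    rcases H p q hR with he | hm
    · exact Or.inl ⟨p, q, Steps.refl _, Steps.refl _, he⟩
    · obtain ⟨k, hk, hp₁⟩ := stepJ_some hs
      rcases hm with ⟨h1, h2⟩ | ⟨u, h1, h2, h3, _, _⟩ | ⟨h1, h2⟩ | ⟨j₁, j₂, h1, h2, h3⟩
      · rw [h1] at hk; exact absurd hk (by simp)
      · rw [h1] at hk
        injection hk with e
        exact absurd (e ▸ h3 (k+1)) (by simp)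
      · rw [h1] at hk
        injection hk with e
        exact absurd e (by simp)
      · rw [h1] at hk
        injection hk with e
        injection e with e'
        have hj : j₁ = k := by omega
        subst hj
        subst hp₁
        rcases ih hh (q + (j₂+1)) h3 with
          ⟨p', q', hs1, hs2, he⟩ | ⟨r', hs2, hh2, hR2⟩
        · exact Or.inl ⟨p', q', Steps.tail hs hs1,
            Steps.tail (stepJ_jmp h2) hs2, he⟩
        · exact Or.inr ⟨r', Steps.tail (stepJ_jmp h2) hs2, hh2, hR2⟩

theorem lbisim {ι₁ ι₂ : St A} {R} (H : MatH ι₁ ι₂ R) :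
    ∀ (d p q), R p q → extT ι₁ d p = extT ι₂ d q := by
  intro d
  induction d with
  | zero => intro _ _ _; rfl
  | succ d ih =>
    intro p q hR
    by_cases h₁ : ∃ r, Res ι₁ p r
    · obtain ⟨r, hr⟩ := h₁
      rcases matH_trans H hr.1 hr.2 q hR with
        ⟨p', q', hs1, hs2, he⟩ | ⟨r', hs2, hh2, hR2⟩
      · rw [extT_steps hs1, he (d+1), ← extT_steps hs2]
      · rw [extT_steps hr.1 (d+1), extT_steps hs2 (d+1)]
        rcases H r r' hR2 with he | hm
        · exact he (d+1)
        · have hres1 : resolve ι₁ r = some r := resolve_eq ⟨Steps.refl _, hr.2⟩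
          have hres2 : resolve ι₂ r' = some r' := resolve_eq ⟨Steps.refl _, hh2⟩
          rw [extT_succ_some hres1, extT_succ_some hres2]
          rcases hm with ⟨h1, h2⟩ | ⟨u, h1, h2, h3, h4, h5⟩ | ⟨h1, h2⟩ | ⟨j₁, j₂, h1, h2, h3⟩
          · rw [extHead_none _ h1, extHead_none _ h2]
          · cases u with
            | basic a =>
              rw [extHead_basic _ h1, extHead_basic _ h2, ih _ _ h4]
            | ptst a =>
              rw [extHead_ptst _ h1, extHead_ptst _ h2, ih _ _ h4, ih _ _ h5]
            | ntst a =>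
              rw [extHead_ntst _ h1, extHead_ntst _ h2, ih _ _ h4, ih _ _ h5]
            | jmp k => exact absurd rfl (h3 k)
            | halt => rw [extHead_halt _ h1, extHead_halt _ h2]
          · rw [extHead_jmp _ h1, extHead_jmp _ h2]
          · have hx := hr.2
            unfold Halted at hx
            rw [stepJ_jmp h1] at hx
            exact absurd hx (by simp)
    · rw [extT_nores h₁]
      by_cases h₂ : ∃ r', Res ι₂ q r'
      · obtain ⟨r', hr'⟩ := h₂
        rcases matH_trans (matH_symm H) hr'.1 hr'.2 p hR with
          ⟨q', p', hs2, hs1, he⟩ | ⟨r, hs1, hh1, hR1⟩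
        · rw [eq_comm, extT_steps hs2 (d+1), he (d+1), ← extT_steps hs1 (d+1),
            extT_nores h₁]
        · exact absurd ⟨r, hs1, hh1⟩ h₁
      · rw [extT_nores h₂]

end PGAAux

namespace PGAAux
open PInstr
variable {A : Type}

lemma shf_pre (L : List (PInstr A)) (τ : St A) (n : ℕ) :
    shf (pre L τ) L.length n = τ n := by
  unfold shf
  rw [pre_ge (by omega)]
  congr 1
  omega

lemma extT_pre_ge {L : List (PInstr A)} {τ : St A} {p} (h : L.length ≤ p) (d : ℕ) :
    extT (pre L τ) d p = extT τ d (p - L.length) := by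
  conv_lhs => rw [show p = (p - L.length) + L.length by omega]
  rw [extT_shf]
  exact extT_fun_congr (shf_pre L τ) d _

/-- Congruence: extraction-equal tails can be exchanged below a common prefix. -/
lemma extT_pre_congr {τ₁ τ₂ : St A} (h : ∀ d p, extT τ₁ d p = extT τ₂ d p)
    (L : List (PInstr A)) : ∀ d p, extT (pre L τ₁) d p = extT (pre L τ₂) d p := by
  have H : MatH (pre L τ₁) (pre L τ₂) (fun p q => p = q) := by
    rintro p q rfl
    rcases Nat.lt_or_ge p L.length with hp | hp
    · right
      have h1 : pre L τ₁ p = some L[p] := by rw [pre_lt hp, List.getElem?_eq_getElem hp]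
      have h2 : pre L τ₂ p = some L[p] := by rw [pre_lt hp, List.getElem?_eq_getElem hp]
      cases hu : L[p] with
      | jmp k =>
        cases k with
        | zero => exact Or.inr (Or.inr (Or.inl ⟨hu ▸ h1, hu ▸ h2⟩))
        | succ j => exact Or.inr (Or.inr (Or.inr ⟨j, j, hu ▸ h1, hu ▸ h2, rfl⟩))
      | basic a => exact Or.inr (Or.inl ⟨basic a, hu ▸ h1, hu ▸ h2, by simp, rfl, rfl⟩)
      | ptst a => exact Or.inr (Or.inl ⟨ptst a, hu ▸ h1, hu ▸ h2, by simp, rfl, rfl⟩)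
      | ntst a => exact Or.inr (Or.inl ⟨ntst a, hu ▸ h1, hu ▸ h2, by simp, rfl, rfl⟩)
      | halt => exact Or.inr (Or.inl ⟨PInstr.halt, hu ▸ h1, hu ▸ h2, by simp, rfl, rfl⟩)
    · left
      intro d
      rw [extT_pre_ge hp, extT_pre_ge hp]
      exact h d _
  exact fun d p => lbisim H d p p rfl

lemma cyc_eq_pre (L : List (PInstr A)) (n : ℕ) : cyc L n = pre L (cyc L) n := by
  rcases Nat.lt_or_ge n L.length with h | h
  · rw [pre_lt h]
    unfold cyc
    rw [Nat.mod_eq_of_lt h]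
  · rw [pre_ge h]
    unfold cyc
    congr 1
    conv_lhs => rw [show n = (n - L.length) + L.length by omega]
    rw [Nat.add_mod_right]

lemma cyc_period (L : List (PInstr A)) (n : ℕ) : cyc L (n + L.length) = cyc L n := by
  unfold cyc
  rw [Nat.add_mod_right]

lemma extT_cyc_mod (L : List (PInstr A)) (hL : L ≠ []) (d : ℕ) : ∀ (p : ℕ),
    extT (cyc L) d p = extT (cyc L) d (p % L.length) := by
  have hc : 0 < L.length := List.length_pos_iff.mpr hL
  intro p
  induction p using Nat.strong_induction_on with
  | _ p ih =>
    rcases Nat.lt_or_ge p L.length with h | h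
    · rw [Nat.mod_eq_of_lt h]
    · have h1 : extT (cyc L) d ((p - L.length) + L.length) = extT (cyc L) d (p - L.length) :=
        extT_period (b := 0) (fun n _ => cyc_period L n) (by omega) d
      conv_lhs => rw [show p = (p - L.length) + L.length by omega]
      rw [h1, ih _ (by omega)]
      congr 1
      conv_rhs => rw [show p = (p - L.length) + L.length by omega]
      rw [Nat.add_mod_right]

def pwL (L : List (PInstr A)) : ℕ → List (PInstr A)
  | 0 => L
  | n+1 => L ++ pwL L n

lemma pwL_length (L : List (PInstr A)) (n : ℕ) : (pwL L n).length = (n+1) * L.length := by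
  induction n with
  | zero => simp [pwL]
  | succ n ih => simp [pwL, ih]; ring

lemma pwL_get (L : List (PInstr A)) (hL : L ≠ []) (n : ℕ) : ∀ i,
    (pwL L n)[i]? = if i < (pwL L n).length then L[i % L.length]? else none := by
  have hc : 0 < L.length := List.length_pos_iff.mpr hL
  induction n with
  | zero =>
    intro i
    show L[i]? = _
    have hlen : (pwL L 0).length = L.length := by show L.length = _; rfl
    rcases Nat.lt_or_ge i L.length with h | h
    · rw [if_pos (by omega), Nat.mod_eq_of_lt h]
    · rw [if_neg (by omega), List.getElem?_eq_none h]
  | succ n ih =>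
    intro i
    show (L ++ pwL L n)[i]? = _
    have hlen : (pwL L (n+1)).length = L.length + (pwL L n).length := by
      show (L ++ pwL L n).length = _; simp
    rcases Nat.lt_or_ge i L.length with h | h
    · rw [List.getElem?_append_left h, if_pos (by omega), Nat.mod_eq_of_lt h]
    · rw [List.getElem?_append_right h, ih]
      have hmod : (i - L.length) % L.length = i % L.length := by
        conv_rhs => rw [show i = (i - L.length) + L.length by omega]
        rw [Nat.add_mod_right]
      rw [hmod]
      congr 1
      simp only [eq_iff_iff]
      omega

lemma cyc_pwL (L : List (PInstr A)) (hL : L ≠ []) (n : ℕ) (m : ℕ) :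
    cyc (pwL L n) m = cyc L m := by
  have hc : 0 < L.length := List.length_pos_iff.mpr hL
  have hlen := pwL_length L n
  unfold cyc
  rw [pwL_get L hL n, if_pos (Nat.mod_lt _ (by rw [pwL_length]; exact Nat.mul_pos (by omega) hc))]
  congr 1
  rw [hlen, Nat.mod_mod_of_dvd _ ⟨n+1, by ring⟩]

/-- rotation: the stream of `(x;y)^ω` equals that of `x;(y;x)^ω`. -/
lemma cyc_rot (Lx Ly : List (PInstr A)) (hx : Lx ≠ []) (n : ℕ) :
    cyc (Lx ++ Ly) n = pre Lx (cyc (Ly ++ Lx)) n := by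
  have ha : 0 < Lx.length := List.length_pos_iff.mpr hx
  set a := Lx.length
  set b := Ly.length
  have hab : (Lx ++ Ly).length = a + b := by simp [a, b]
  have hba : (Ly ++ Lx).length = b + a := by simp [a, b]
  rcases Nat.lt_or_ge n a with h | h
  · rw [pre_lt h]
    unfold cyc
    rw [hab, Nat.mod_eq_of_lt (by omega), List.getElem?_append_left h]
  · rw [pre_ge h]
    unfold cyc
    rw [hab, hba]
    set m := n - a with hm
    have hn : n = a + m := by omega
    set r := m % (b + a) with hr
    have hrlt : r < b + a := Nat.mod_lt _ (by omega)
    have h2 : (a + m) % (a + b) = (a + r) % (a + b) := by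
      conv_lhs => rw [show m = (b+a) * (m / (b+a)) + r by rw [hr]; exact (Nat.div_add_mod m (b+a)).symm]
      rw [show a + ((b+a) * (m / (b+a)) + r) = (a + r) + (a+b) * (m/(b+a)) by ring]
      rw [Nat.add_mul_mod_self_left]
    rw [hn, h2]
    rcases Nat.lt_or_ge r b with h3 | h3
    · rw [Nat.mod_eq_of_lt (by omega), List.getElem?_append_right (by omega),
        List.getElem?_append_left h3]
      congr 1
      omega
    · have h4 : (a + r) % (a + b) = r - b := by
        rw [show a + r = (r - b) + (a + b) by omega, Nat.add_mod_right,
          Nat.mod_eq_of_lt (by omega)]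
      rw [h4, List.getElem?_append_left (by omega),
        List.getElem?_append_right h3]

end PGAAux

namespace PGAAux
open PInstr
variable {A : Type}

/-- halts in exactly n jump-steps -/
def hin (ι : St A) : ℕ → ℕ → Prop
  | 0, p => Halted ι p
  | n+1, p => ∃ q, stepJ ι p = some q ∧ hin ι n q

lemma res_hin {ι : St A} {p r} (h : Res ι p r) : ∃ n, hin ι n p := by
  obtain ⟨hs, hh⟩ := h
  induction hs with
  | refl => exact ⟨0, hh⟩
  | tail hstep _ ih =>
    obtain ⟨n, hn⟩ := ih hh
    exact ⟨n+1, _, hstep, hn⟩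

lemma hin_res {ι : St A} : ∀ {n p}, hin ι n p → ∃ r, Res ι p r := by
  intro n
  induction n with
  | zero => exact fun h => ⟨_, Steps.refl _, h⟩
  | succ n ih =>
    rintro p ⟨q, hq, hh⟩
    obtain ⟨r, hr⟩ := ih hh
    exact ⟨r, Steps.tail hq hr.1, hr.2⟩

lemma hin_unique {ι : St A} : ∀ {n m p}, hin ι n p → hin ι m p → n = m := by
  intro n
  induction n with
  | zero =>
    intro m p h1 h2
    cases m with
    | zero => rfl
    | succ m =>
      obtain ⟨q, hq, _⟩ := h2
      have h1' : stepJ ι p = none := h1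
      rw [h1'] at hq; exact absurd hq (by simp)
  | succ n ih =>
    intro m p h1 h2
    obtain ⟨q, hq, hh⟩ := h1
    cases m with
    | zero =>
      have h2' : stepJ ι p = none := h2
      rw [h2'] at hq; exact absurd hq (by simp)
    | succ m =>
      obtain ⟨q', hq', hh'⟩ := h2
      rw [hq] at hq'; injection hq' with e; subst e
      rw [ih hh hh']

/-- positions after i steps -/
def chainP (ι : St A) : ℕ → ℕ → Option ℕ
  | 0, p => some p
  | i+1, p =>
    match stepJ ι p with
    | some q => chainP ι i q
    | none => none

lemma hin_chainP {ι : St A} : ∀ {n p}, hin ι n p → ∀ i, i ≤ n →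
    ∃ q, chainP ι i p = some q ∧ hin ι (n - i) q := by
  intro n
  induction n with
  | zero =>
    intro p h i hi
    interval_cases i
    exact ⟨p, rfl, h⟩
  | succ n ih =>
    rintro p ⟨q, hq, hh⟩ i hi
    cases i with
    | zero => exact ⟨p, rfl, _, hq, hh⟩
    | succ i =>
      obtain ⟨r, hr, hhr⟩ := ih hh i (by omega)
      refine ⟨r, ?_, by simpa [Nat.succ_sub_succ] using hhr⟩
      show (match stepJ ι p with
            | some q => chainP ι i q
            | none => none) = some r
      rw [hq]
      exact hr

section cycL
variable (L : List (PInstr A))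

def jarg : PInstr A → ℕ
  | jmp k => k
  | _ => 0

def jumpMax : ℕ := L.foldr (fun u m => max (jarg u) m) 0

lemma jumpMax_mem {L : List (PInstr A)} {j} (h : jmp j ∈ L) : j ≤ jumpMax L := by
  induction L with
  | nil => simp at h
  | cons u us ih =>
    have he : jumpMax (u :: us) = max (jarg u) (jumpMax us) := rfl
    rcases List.mem_cons.mp h with heq | h2
    · subst heq
      rw [he]
      exact le_max_left _ _
    · rw [he]
      exact le_trans (ih h2) (le_max_right _ _)

lemma cyc_congr_mod {L : List (PInstr A)} {p p'} (h : p % L.length = p' % L.length) :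
    cyc L p = cyc L p' := by
  unfold cyc; rw [h]

lemma mod_add_cong {p p' c k : ℕ} (h : p % c = p' % c) : (p + k) % c = (p' + k) % c := by
  rcases Nat.eq_zero_or_pos c with rfl | hc
  · simp at h ⊢; omega
  · rw [Nat.add_mod, h, ← Nat.add_mod]

lemma halted_congr {ι ι' : St A} {p p'} (h : ι p = ι' p') (hh : Halted ι p) :
    Halted ι' p' := by
  have hh' : stepJ ι p = none := hh
  show stepJ ι' p' = none
  unfold stepJ at hh' ⊢
  rw [← h]
  revert hh'
  cases hu : ι p with
  | none => intro _; rfl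
  | some u =>
    cases u with
    | jmp k =>
      cases k with
      | zero => intro _; rfl
      | succ j => intro hc; exact absurd hc (by simp)
    | basic a => intro _; rfl
    | ptst a => intro _; rfl
    | ntst a => intro _; rfl
    | halt => intro _; rfl

lemma hin_cyc_mod {L : List (PInstr A)} : ∀ {n p p'}, p % L.length = p' % L.length →
    hin (cyc L) n p → hin (cyc L) n p' := by
  intro n
  induction n with
  | zero =>
    intro p p' h hh
    have hcc : cyc L p = cyc L p' := by unfold cyc; rw [h]
    exact halted_congr hcc hh
  | succ n ih =>
    rintro p p' h ⟨q, hq, hh⟩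
    obtain ⟨k, hk, rfl⟩ := stepJ_some hq
    have hcc : cyc L p = cyc L p' := by unfold cyc; rw [h]
    have hk' : cyc L p' = some (jmp (k+1)) := by rw [← hcc]; exact hk
    exact ⟨p' + (k+1), stepJ_jmp hk', ih (mod_add_cong h) hh⟩

end cycL

/-- chain boundedness on a cyclic stream: every halting chain has length at most the period -/
lemma hin_le_period {L : List (PInstr A)} (hL : L ≠ []) {n p}
    (h : hin (cyc L) n p) : n ≤ L.length := by
  set c := L.length with hc
  have hc0 : 0 < c := List.length_pos_iff.mpr hL
  by_contra hgt
  push_neg at hgt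
  -- map each i ∈ [0, c] to the residue of the chain position after i steps
  have hmaps : ∀ i ∈ Finset.range (c+1), ((chainP (cyc L) i p).getD 0) % c ∈ Finset.range c := by
    intro i _
    exact Finset.mem_range.mpr (Nat.mod_lt _ hc0)
  obtain ⟨i, hi, j, hj, hij, heq⟩ :=
    Finset.exists_ne_map_eq_of_card_lt_of_maps_to (by simp) hmaps
  simp only [Finset.mem_range] at hi hj
  obtain ⟨qi, hqi, hhi⟩ := hin_chainP h i (by omega)
  obtain ⟨qj, hqj, hhj⟩ := hin_chainP h j (by omega)
  rw [hqi, hqj] at heq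
  simp only [Option.getD_some] at heq
  have := hin_unique (hin_cyc_mod heq hhi) hhj
  omega

lemma stepJ_cyc_bound {L : List (PInstr A)} {p q M} (hM : jumpMax L ≤ M)
    (h : stepJ (cyc L) p = some q) : q ≤ p + (M + 1) := by
  obtain ⟨k, hk, rfl⟩ := stepJ_some h
  unfold cyc at hk
  have hmem : jmp (k+1) ∈ L := by
    rcases Nat.lt_or_ge (p % L.length) L.length with h2 | h2
    · have hsome : some L[p % L.length] = some (jmp (k+1)) :=
        (List.getElem?_eq_getElem h2).symm.trans hk
      injection hsome with e
      exact e ▸ List.getElem_mem h2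
    · rw [List.getElem?_eq_none h2] at hk; exact absurd hk (by simp)
  have := jumpMax_mem hmem
  omega

lemma hin_pos_bound {L : List (PInstr A)} {M} (hM : jumpMax L ≤ M) :
    ∀ {n p}, hin (cyc L) n p → ∃ q, Res (cyc L) p q ∧ q ≤ p + n * (M + 1) := by
  intro n
  induction n with
  | zero => exact fun h => ⟨_, ⟨Steps.refl _, h⟩, by omega⟩
  | succ n ih =>
    rintro p ⟨q, hq, hh⟩
    obtain ⟨r, hr, hrb⟩ := ih hh
    refine ⟨r, ⟨Steps.tail hq hr.1, hr.2⟩, ?_⟩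
    have := stepJ_cyc_bound hM hq
    have : q ≤ p + (M+1) := this
    calc r ≤ q + n * (M+1) := hrb
    _ ≤ p + (M+1) + n * (M+1) := by omega
    _ = p + (n+1) * (M+1) := by ring

/-- the junk stream -/
def junk : St A := fun _ => some (jmp 0)

lemma junk_res (LL : List (PInstr A)) : ∀ p, ∃ r, Res (pre LL junk) p r := by
  have : ∀ fuel p, LL.length ≤ p + fuel → ∃ r, Res (pre LL junk) p r := by
    intro fuel
    induction fuel with
    | zero =>
      intro p hp
      refine ⟨p, Steps.refl _, halted_jmp0 ?_⟩
      rw [pre_ge (by omega)]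
      rfl
    | succ fuel ih =>
      intro p hp
      rcases Nat.lt_or_ge p LL.length with h | h
      · cases hs : stepJ (pre LL junk) p with
        | none => exact ⟨p, Steps.refl _, hs⟩
        | some q =>
          obtain ⟨k, _, rfl⟩ := stepJ_some hs
          obtain ⟨r, hr⟩ := ih (p + (k+1)) (by omega)
          exact ⟨r, Steps.tail hs hr.1, hr.2⟩
      · refine ⟨p, Steps.refl _, halted_jmp0 ?_⟩
        rw [pre_ge h]
        rfl
  exact fun p => this LL.length p (by omega)

lemma steps_agree_le {ι ι' : St A} : ∀ {p r}, Steps ι p r →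
    (∀ x, p ≤ x → x ≤ r → ι x = ι' x) → Steps ι' p r := by
  intro p r h
  induction h with
  | refl => intro _; exact Steps.refl _
  | @tail p q r hs hsteps ih =>
    intro hagr
    have hpq : p ≤ q := by obtain ⟨k, _, rfl⟩ := stepJ_some hs; omega
    have hqr : q ≤ r := steps_mono hsteps
    refine Steps.tail ?_ (ih (fun x h1 h2 => hagr x (by omega) h2))
    rw [← stepJ_congr (hagr p le_rfl (by omega))]
    exact hs

lemma res_agree_le {ι ι' : St A} {p r} (h : Res ι p r)
    (hagr : ∀ x, p ≤ x → x ≤ r → ι x = ι' x) : Res ι' p r := by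
  refine ⟨steps_agree_le h.1 hagr, ?_⟩
  have h2 := h.2
  unfold Halted at h2 ⊢
  rw [← stepJ_congr (hagr r (steps_mono h.1) le_rfl)]
  exact h2

lemma pwL_junk_agree {L : List (PInstr A)} (hL : L ≠ []) (K : ℕ) {q : ℕ}
    (h : q < (pwL L K).length) : pre (pwL L K) junk q = cyc L q := by
  rw [pre_lt h, pwL_get L hL K, if_pos h]
  rfl

/-- Cut-off lemma: up to depth d, a cyclic stream behaves like a long finite unrolling
followed by junk. -/
lemma extT_cyc_cut {L : List (PInstr A)} (hL : L ≠ []) {M} (hM : jumpMax L ≤ M)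
    (K : ℕ) : ∀ (d : ℕ) (p : ℕ),
    p + d * (L.length * (M+1) + 2) ≤ (pwL L K).length →
    extT (cyc L) d p = extT (pre (pwL L K) junk) d p := by
  have hc0 : 0 < L.length := List.length_pos_iff.mpr hL
  intro d
  induction d with
  | zero => intro p _; rfl
  | succ d ih =>
    intro p hbud
    set c := L.length with hc
    set B := c * (M+1) + 2 with hB
    by_cases hres : ∃ q, Res (cyc L) p q
    · obtain ⟨q, hq⟩ := hres
      obtain ⟨n, hn⟩ := res_hin hq
      have hnc : n ≤ c := hin_le_period hL hn
      obtain ⟨q', hq', hq'b⟩ := hin_pos_bound hM hn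
      have hqq : q' = q := steps_unique hq'.1 hq'.2 hq.1 hq.2
      rw [hqq] at hq'b
      have hqb : q ≤ p + c * (M+1) := by
        calc q ≤ p + n * (M+1) := hq'b
        _ ≤ p + c * (M+1) := by
            have : n * (M+1) ≤ c * (M+1) := Nat.mul_le_mul_right _ hnc
            omega
      have hqlt : q + 2 ≤ (pwL L K).length := by
        have : p + B ≤ (pwL L K).length := by
          have : B ≤ (d+1) * B := Nat.le_mul_of_pos_left _ (by omega)
          omega
        omega
      have hagr : ∀ x, p ≤ x → x ≤ q → cyc L x = pre (pwL L K) junk x :=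
        fun x _ hx => (pwL_junk_agree hL K (by omega)).symm
      have hq2 : Res (pre (pwL L K) junk) p q := res_agree_le hq hagr
      rw [extT_succ_some (resolve_eq hq), extT_succ_some (resolve_eq hq2)]
      have hiq : pre (pwL L K) junk q = cyc L q := pwL_junk_agree hL K (by omega)
      have hch : ∀ j, j ≤ 2 → extT (cyc L) d (q + j) = extT (pre (pwL L K) junk) d (q + j) := by
        intro j hj
        refine ih (q + j) ?_
        have : d * B ≤ (d+1) * B := Nat.mul_le_mul_right _ (by omega)
        have hq2b : q + j ≤ p + B := by omega
        have : p + (d+1) * B = p + B + d * B := by ring_nf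
        omega
      cases hu : cyc L q with
      | none => rw [extHead_none _ hu, extHead_none _ (hiq.trans hu)]
      | some u =>
        cases u with
        | basic a => rw [extHead_basic _ hu, extHead_basic _ (hiq.trans hu), hch 1 (by omega)]
        | ptst a => rw [extHead_ptst _ hu, extHead_ptst _ (hiq.trans hu), hch 1 (by omega), hch 2 (by omega)]
        | ntst a => rw [extHead_ntst _ hu, extHead_ntst _ (hiq.trans hu), hch 1 (by omega), hch 2 (by omega)]
        | jmp k => rw [extHead_jmp _ hu, extHead_jmp _ (hiq.trans hu)]
        | halt => rw [extHead_halt _ hu, extHead_halt _ (hiq.trans hu)]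
    · rw [extT_nores hres]
      obtain ⟨r, hr⟩ := junk_res (pwL L K) p
      rw [extT_steps hr.1 (d+1)]
      rcases Nat.lt_or_ge r (pwL L K).length with h2 | h2
      · exfalso
        apply hres
        refine ⟨r, res_agree_le hr ?_⟩
        intro x hx1 hx2
        exact pwL_junk_agree hL K (by omega)
      · rw [extT_jmp0 _ (d+1)]
        rw [pre_ge h2]
        rfl

/-- Semantic congruence for repetition. -/
lemma extT_cyc_congr {L L' : List (PInstr A)} (hL : L ≠ []) (hL' : L' ≠ [])
    (hS : ∀ (τ : St A) (d p : ℕ), extT (pre L τ) d p = extT (pre L' τ) d p) :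
    ∀ (d p : ℕ), extT (cyc L) d p = extT (cyc L') d p := by
  have hswap : ∀ (K : ℕ) (d p : ℕ),
      extT (pre (pwL L K) junk) d p = extT (pre (pwL L' K) junk) d p := by
    intro K
    induction K with
    | zero => exact fun d p => hS junk d p
    | succ K ih =>
      intro d p
      calc extT (pre (pwL L (K+1)) junk) d p
          = extT (pre L (pre (pwL L K) junk)) d p :=
            extT_fun_congr (fun n => pre_append L (pwL L K) junk n) d p
        _ = extT (pre L' (pre (pwL L K) junk)) d p := hS _ d p
        _ = extT (pre L' (pre (pwL L' K) junk)) d p := extT_pre_congr ih L' d p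
        _ = extT (pre (pwL L' (K+1)) junk) d p :=
            (extT_fun_congr (fun n => pre_append L' (pwL L' K) junk n) d p).symm
  intro d p
  set M := max (jumpMax L) (jumpMax L') with hM
  set B := max (L.length * (M+1) + 2) (L'.length * (M+1) + 2) with hB
  set K := p + d * B with hK
  have hbud1 : p + d * (L.length * (M+1) + 2) ≤ (pwL L K).length := by
    rw [pwL_length]
    have h1 : p + d * (L.length * (M+1) + 2) ≤ K := by
      have : d * (L.length * (M+1) + 2) ≤ d * B := Nat.mul_le_mul_left _ (le_max_left _ _)
      omega
    have h2 : K + 1 ≤ (K+1) * L.length :=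
      Nat.le_mul_of_pos_right _ (List.length_pos_iff.mpr hL)
    omega
  have hbud2 : p + d * (L'.length * (M+1) + 2) ≤ (pwL L' K).length := by
    rw [pwL_length]
    have h1 : p + d * (L'.length * (M+1) + 2) ≤ K := by
      have : d * (L'.length * (M+1) + 2) ≤ d * B := Nat.mul_le_mul_left _ (le_max_right _ _)
      omega
    have h2 : K + 1 ≤ (K+1) * L'.length :=
      Nat.le_mul_of_pos_right _ (List.length_pos_iff.mpr hL')
    omega
  rw [extT_cyc_cut hL (le_max_left _ _) K d p hbud1,
    extT_cyc_cut hL' (le_max_right _ _) K d p hbud2]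
  exact hswap K d p

end PGAAux

namespace PGAAux
open PInstr
variable {A : Type}

lemma pre_zero (u : PInstr A) (L τ) : pre (u :: L) τ 0 = some u := by
  rw [pre_lt (by simp)]
  simp

lemma pre_succ (u : PInstr A) (L τ m) : pre (u :: L) τ (m+1) = pre L τ m := by
  rw [pre_cons]

lemma toL_pw_none {x : ISTm A} (h : toL x = none) : ∀ n, toL (x.pw n) = none := by
  intro n
  cases n with
  | zero => exact h
  | succ n =>
    show toL (ISTm.seq x (x.pw n)) = none
    unfold toL
    rw [h]

lemma toL_pw_some {x : ISTm A} {L} (h : toL x = some L) :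
    ∀ n, toL (x.pw n) = some (pwL L n) := by
  intro n
  induction n with
  | zero => exact h
  | succ n ih =>
    show toL (ISTm.seq x (x.pw n)) = some (L ++ pwL L n)
    unfold toL
    rw [h, ih]

lemma inst_pw_inf {x : ISTm A} (h : toL x = none) (n : ℕ) : inst (x.pw n) = inst x := by
  cases n with
  | zero => rfl
  | succ n => exact inst_seq_inf h

lemma toL_cat (us : List (PInstr A)) (Y : ISTm A) :
    toL (ISTm.cat us Y) = (toL Y).map (us ++ ·) := by
  induction us with
  | nil =>
    show toL Y = _
    cases toL Y <;> simp
  | cons u us ih =>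
    show toL (ISTm.seq (ISTm.ins u) (ISTm.cat us Y)) = _
    have h1 : toL (ISTm.seq (ISTm.ins u) (ISTm.cat us Y)) =
        match toL (ISTm.cat us Y) with
        | none => none
        | some M => some ([u] ++ M) := rfl
    rw [h1, ih]
    cases toL Y <;> simp

lemma toL_nel (u : PInstr A) (us : List (PInstr A)) : toL (ISTm.nel u us) = some (u :: us) := by
  induction us generalizing u with
  | nil => rfl
  | cons v vs ih =>
    show toL (ISTm.seq (ISTm.ins u) (ISTm.nel v vs)) = _
    have h1 : toL (ISTm.seq (ISTm.ins u) (ISTm.nel v vs)) =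
        match toL (ISTm.nel v vs) with
        | none => none
        | some M => some ([u] ++ M) := rfl
    rw [h1, ih v]
    rfl

lemma inst_cat_inf {Y : ISTm A} (h : toL Y = none) (us : List (PInstr A)) :
    ∀ n, inst (ISTm.cat us Y) n = pre us (inst Y) n := by
  induction us with
  | nil =>
    intro n
    rw [pre_nil]
    rfl
  | cons u us ih =>
    intro n
    have h2 : toL (ISTm.cat us Y) = none := by
      rw [toL_cat, h]
      rfl
    show inst (ISTm.seq (ISTm.ins u) (ISTm.cat us Y)) n = _
    rw [inst_seq_fin (s := ISTm.ins u) (L := [u]) rfl]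
    cases n with
    | zero => rw [pre_zero, pre_zero]
    | succ m =>
      rw [pre_succ, pre_succ, ← ih m]
      show pre [u] (inst (ISTm.cat us Y)) (m+1) = _
      rw [pre_ge (by simp)]
      simp

/-- The only-position-0 difference lemma packaged for pga5/pga6/pga8 style streams. -/
lemma extT_tail_agree {σ₁ σ₂ : St A} (h : ∀ n, 1 ≤ n → σ₁ n = σ₂ n) :
    ∀ (d p : ℕ), 1 ≤ p → extT σ₁ d p = extT σ₂ d p :=
  fun d p hp => extT_agree d p (fun q hq => h q (by omega))

end PGAAux

namespace PGAAux
open PInstr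
variable {A : Type}

def SInv (t t' : ISTm A) : Prop :=
  (toL t).map List.length = (toL t').map List.length ∧
  ∀ (τ : St A) (d p : ℕ), extT (app t τ) d p = extT (app t' τ) d p

lemma shape_cases {s s' : ISTm A}
    (h : (toL s).map List.length = (toL s').map List.length) :
    (toL s = none ∧ toL s' = none) ∨
    (∃ L L', toL s = some L ∧ toL s' = some L' ∧ L.length = L'.length) := by
  cases hs : toL s with
  | none =>
    cases hs' : toL s' with
    | none => exact Or.inl ⟨rfl, rfl⟩
    | some L' => rw [hs, hs'] at h; exact absurd h (by simp)
  | some L =>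
    cases hs' : toL s' with
    | none => rw [hs, hs'] at h; exact absurd h (by simp)
    | some L' =>
      rw [hs, hs'] at h
      simp only [Option.map_some, Option.some.injEq] at h
      exact Or.inr ⟨L, L', rfl, rfl, h⟩

lemma toL_seq_none₁ {s : ISTm A} (hs : toL s = none) (t : ISTm A) :
    toL (ISTm.seq s t) = none := by
  show (match toL s with
        | none => none
        | some L => match toL t with
          | none => none
          | some M => some (L ++ M)) = none
  rw [hs]

lemma toL_seq_none₂ {s t : ISTm A} {L} (hs : toL s = some L) (ht : toL t = none) :
    toL (ISTm.seq s t) = none := by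
  show (match toL s with
        | none => none
        | some L => match toL t with
          | none => none
          | some M => some (L ++ M)) = none
  rw [hs, ht]

lemma toL_seq_some {s t : ISTm A} {L M} (hs : toL s = some L) (ht : toL t = some M) :
    toL (ISTm.seq s t) = some (L ++ M) := by
  show (match toL s with
        | none => none
        | some L => match toL t with
          | none => none
          | some M => some (L ++ M)) = some (L ++ M)
  rw [hs, ht]

lemma toL_rep (t : ISTm A) : toL (ISTm.rep t) = none := rfl

lemma cyc_cons_zero {u : PInstr A} {us : List (PInstr A)} {p}
    (h : p % (us.length + 1) = 0) : cyc (u :: us) p = some u := by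
  unfold cyc
  have : (u :: us).length = us.length + 1 := by simp
  rw [this, h]
  simp

lemma cyc_cons_succ {u : PInstr A} {us : List (PInstr A)} {p m}
    (h : p % (us.length + 1) = m + 1) : cyc (u :: us) p = us[m]? := by
  unfold cyc
  have hlen : (u :: us).length = us.length + 1 := by simp
  rw [hlen, h]
  simp

theorem eqI_sinv {t t' : ISTm A} (h : EqI t t') : SInv t t' := by
  induction h with
  | refl t => exact ⟨rfl, fun _ _ _ => rfl⟩
  | symm _ ih => exact ⟨ih.1.symm, fun τ d p => (ih.2 τ d p).symm⟩
  | trans _ _ ih1 ih2 =>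
    exact ⟨ih1.1.trans ih2.1, fun τ d p => (ih1.2 τ d p).trans (ih2.2 τ d p)⟩
  | @seqCongr s s' t t' _ _ ihs iht =>
    obtain ⟨hsh_s, hex_s⟩ := ihs
    obtain ⟨hsh_t, hex_t⟩ := iht
    rcases shape_cases hsh_s with ⟨hs, hs'⟩ | ⟨Ls, Ls', hs, hs', hlen_s⟩
    · refine ⟨?_, ?_⟩
      · rw [toL_seq_none₁ hs, toL_seq_none₁ hs']
      · intro τ d p
        rw [app_inf (toL_seq_none₁ hs t) τ, app_inf (toL_seq_none₁ hs' t') τ,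
          inst_seq_inf hs, inst_seq_inf hs', ← app_inf hs τ, ← app_inf hs' τ]
        exact hex_s τ d p
    · rcases shape_cases hsh_t with ⟨ht0, ht0'⟩ | ⟨Lt, Lt', ht0, ht0', hlen_t⟩
      · refine ⟨?_, ?_⟩
        · rw [toL_seq_none₂ hs ht0, toL_seq_none₂ hs' ht0']
        · intro τ d p
          rw [app_inf (toL_seq_none₂ hs ht0) τ, app_inf (toL_seq_none₂ hs' ht0') τ,
            inst_seq_fin hs, inst_seq_fin hs']
          have htails : ∀ d p, extT (inst t) d p = extT (inst t') d p := by
            intro d p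
            rw [← app_inf ht0 τ, ← app_inf ht0' τ]
            exact hex_t τ d p
          calc extT (pre Ls (inst t)) d p
              = extT (app s (inst t)) d p := by rw [app_fin hs]
            _ = extT (app s' (inst t)) d p := hex_s _ d p
            _ = extT (pre Ls' (inst t)) d p := by rw [app_fin hs']
            _ = extT (pre Ls' (inst t')) d p := extT_pre_congr htails Ls' d p
      · refine ⟨?_, ?_⟩
        · rw [toL_seq_some hs ht0, toL_seq_some hs' ht0']
          simp [hlen_s, hlen_t]
        · intro τ d p
          rw [app_fin (toL_seq_some hs ht0) τ, app_fin (toL_seq_some hs' ht0') τ]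
          have htails : ∀ d p, extT (pre Lt τ) d p = extT (pre Lt' τ) d p := by
            intro d p
            rw [← app_fin ht0 τ, ← app_fin ht0' τ]
            exact hex_t τ d p
          calc extT (pre (Ls ++ Lt) τ) d p
              = extT (pre Ls (pre Lt τ)) d p := extT_fun_congr (pre_append _ _ _) d p
            _ = extT (app s (pre Lt τ)) d p := by rw [app_fin hs]
            _ = extT (app s' (pre Lt τ)) d p := hex_s _ d p
            _ = extT (pre Ls' (pre Lt τ)) d p := by rw [app_fin hs']
            _ = extT (pre Ls' (pre Lt' τ)) d p := extT_pre_congr htails Ls' d p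
            _ = extT (pre (Ls' ++ Lt') τ) d p :=
                (extT_fun_congr (pre_append _ _ _) d p).symm
  | @repCongr t t' _ ih =>
    obtain ⟨hsh, hex⟩ := ih
    rcases shape_cases hsh with ⟨h0, h0'⟩ | ⟨L, L', hL, hL', hlen⟩
    · refine ⟨rfl, ?_⟩
      intro τ d p
      rw [app_inf (toL_rep t) τ, app_inf (toL_rep t') τ, inst_rep_inf h0,
        inst_rep_inf h0', ← app_inf h0 τ, ← app_inf h0' τ]
      exact hex τ d p
    · refine ⟨rfl, ?_⟩
      intro τ d p
      rw [app_inf (toL_rep t) τ, app_inf (toL_rep t') τ, inst_rep_fin hL,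
        inst_rep_fin hL']
      refine extT_cyc_congr (toL_ne_nil hL) (toL_ne_nil hL') ?_ d p
      intro τ d p
      rw [← app_fin hL τ, ← app_fin hL' τ]
      exact hex τ d p
  | pga1 x y z =>
    cases hx : toL x with
    | none =>
      refine ⟨?_, ?_⟩
      · rw [toL_seq_none₁ (toL_seq_none₁ hx y) z, toL_seq_none₁ hx]
      · intro τ d p
        rw [app_inf (toL_seq_none₁ (toL_seq_none₁ hx y) z) τ,
          app_inf (toL_seq_none₁ hx (ISTm.seq y z)) τ,
          inst_seq_inf (toL_seq_none₁ hx y), inst_seq_inf hx, inst_seq_inf hx]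
    | some Lx =>
      cases hy : toL y with
      | none =>
        refine ⟨?_, ?_⟩
        · rw [toL_seq_none₁ (toL_seq_none₂ hx hy) z,
            toL_seq_none₂ hx (toL_seq_none₁ hy z)]
        · intro τ d p
          rw [app_inf (toL_seq_none₁ (toL_seq_none₂ hx hy) z) τ,
            app_inf (toL_seq_none₂ hx (toL_seq_none₁ hy z)) τ,
            inst_seq_inf (toL_seq_none₂ hx hy), inst_seq_fin hx, inst_seq_fin hx,
            inst_seq_inf hy]
      | some Ly =>
        cases hz : toL z with
        | none =>
          refine ⟨?_, ?_⟩
          · rw [toL_seq_none₂ (toL_seq_some hx hy) hz,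
              toL_seq_none₂ hx (toL_seq_none₂ hy hz)]
          · intro τ d p
            rw [app_inf (toL_seq_none₂ (toL_seq_some hx hy) hz) τ,
              app_inf (toL_seq_none₂ hx (toL_seq_none₂ hy hz)) τ,
              inst_seq_fin (toL_seq_some hx hy), inst_seq_fin hx,
              inst_seq_fin hy]
            exact extT_fun_congr (pre_append Lx Ly (inst z)) d p
        | some Lz =>
          refine ⟨?_, ?_⟩
          · rw [toL_seq_some (toL_seq_some hx hy) hz,
              toL_seq_some hx (toL_seq_some hy hz)]
            simp
          · intro τ d p
            rw [app_fin (toL_seq_some (toL_seq_some hx hy) hz) τ,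
              app_fin (toL_seq_some hx (toL_seq_some hy hz)) τ,
              List.append_assoc]
  | pga2 x n =>
    refine ⟨rfl, ?_⟩
    intro τ d p
    rw [app_inf (toL_rep _) τ, app_inf (toL_rep _) τ]
    cases hx : toL x with
    | none =>
      rw [inst_rep_inf (toL_pw_none hx n), inst_rep_inf hx, inst_pw_inf hx n]
    | some L =>
      rw [inst_rep_fin (toL_pw_some hx n), inst_rep_fin hx]
      exact extT_fun_congr (cyc_pwL L (toL_ne_nil hx) n) d p
  | pga3 x y =>
    refine ⟨?_, ?_⟩
    · rw [toL_seq_none₁ (toL_rep x) y, toL_rep]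
    · intro τ d p
      rw [app_inf (toL_seq_none₁ (toL_rep x) y) τ, app_inf (toL_rep x) τ,
        inst_seq_inf (toL_rep x)]
  | pga4 x y =>
    cases hx : toL x with
    | none =>
      refine ⟨?_, ?_⟩
      · rw [toL_rep, toL_seq_none₁ hx]
      · intro τ d p
        rw [app_inf (toL_rep _) τ, app_inf (toL_seq_none₁ hx _) τ,
          inst_rep_inf (toL_seq_none₁ hx y), inst_seq_inf hx, inst_seq_inf hx]
    | some Lx =>
      refine ⟨?_, ?_⟩
      · rw [toL_rep, toL_seq_none₂ hx (toL_rep _)]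
      · intro τ d p
        rw [app_inf (toL_rep _) τ, app_inf (toL_seq_none₂ hx (toL_rep _)) τ,
          inst_seq_fin hx]
        cases hy : toL y with
        | none =>
          rw [inst_rep_inf (toL_seq_none₂ hx hy), inst_seq_fin hx,
            inst_rep_inf (toL_seq_none₁ hy x), inst_seq_inf hy]
        | some Ly =>
          rw [inst_rep_fin (toL_seq_some hx hy), inst_rep_fin (toL_seq_some hy hx)]
          exact extT_fun_congr (cyc_rot Lx Ly (toL_ne_nil hx)) d p
  | pga5 us =>
    have hcat1 : toL (ISTm.cat (jmp (us.length + 1) :: us) (ISTm.ins (jmp 0)))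
        = some (jmp (us.length + 1) :: (us ++ [jmp 0])) := by
      rw [toL_cat]
      rfl
    have hcat2 : toL (ISTm.cat (jmp 0 :: us) (ISTm.ins (jmp 0)))
        = some (jmp 0 :: (us ++ [jmp 0])) := by
      rw [toL_cat]
      rfl
    refine ⟨?_, ?_⟩
    · rw [hcat1, hcat2]
      simp
    · intro τ d p
      rw [app_fin hcat1 τ, app_fin hcat2 τ]
      have hagr : ∀ n, 1 ≤ n →
          pre (jmp (us.length + 1) :: (us ++ [jmp 0])) τ n
          = pre (jmp 0 :: (us ++ [jmp 0])) τ n := by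
        rintro (_ | m) h1
        · omega
        · rw [pre_succ, pre_succ]
      rcases Nat.eq_zero_or_pos p with rfl | hp
      · rw [extT_jmpstep0 (k := us.length) (pre_zero _ _ _) d]
        have hmid : pre (jmp (us.length + 1) :: (us ++ [jmp 0])) τ (us.length + 1)
            = some (jmp 0) := by
          rw [pre_succ, pre_lt (by simp),
            List.getElem?_append_right (le_refl _)]
          simp
        rw [extT_jmp0 hmid d, extT_jmp0 (pre_zero _ _ _) d]
      · exact extT_tail_agree hagr d p hp
  | pga6 us l =>
    have hcat1 : toL (ISTm.cat (jmp (us.length + 1) :: us) (ISTm.ins (jmp l)))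
        = some (jmp (us.length + 1) :: (us ++ [jmp l])) := by
      rw [toL_cat]; rfl
    have hcat2 : toL (ISTm.cat (jmp (l + us.length + 1) :: us) (ISTm.ins (jmp l)))
        = some (jmp (l + us.length + 1) :: (us ++ [jmp l])) := by
      rw [toL_cat]; rfl
    refine ⟨?_, ?_⟩
    · rw [hcat1, hcat2]; simp
    · intro τ d p
      rw [app_fin hcat1 τ, app_fin hcat2 τ]
      set σ₁ : St A := pre (jmp (us.length + 1) :: (us ++ [jmp l])) τ with hσ₁
      set σ₂ : St A := pre (jmp (l + us.length + 1) :: (us ++ [jmp l])) τ with hσ₂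
      have hagr : ∀ n, 1 ≤ n → σ₁ n = σ₂ n := by
        rintro (_ | m) h1
        · omega
        · rw [hσ₁, hσ₂, pre_succ, pre_succ]
      rcases Nat.eq_zero_or_pos p with rfl | hp
      · have hmid : σ₁ (us.length + 1) = some (jmp l) := by
          rw [hσ₁, pre_succ, pre_lt (by simp),
            List.getElem?_append_right (le_refl _)]
          simp
        rw [extT_jmpstep0 (k := us.length) (by rw [hσ₁]; exact pre_zero _ _ _) d]
        cases l with
        | zero =>
          rw [extT_jmp0 hmid d]
          have h20 : σ₂ 0 = some (jmp (us.length + 1)) := by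
            rw [hσ₂]
            have : (0 : ℕ) + us.length + 1 = us.length + 1 := by omega
            rw [this]
            exact pre_zero _ _ _
          rw [extT_jmpstep0 (k := us.length) h20 d]
          have hmid2 : σ₂ (us.length + 1) = some (jmp 0) := by
            rw [hσ₂, pre_succ, pre_lt (by simp),
              List.getElem?_append_right (le_refl _)]
            simp
          rw [extT_jmp0 hmid2 d]
        | succ j =>
          rw [extT_jmpstep (k := j) hmid d]
          have h20 : σ₂ 0 = some (jmp ((j + us.length + 1) + 1)) := by
            rw [hσ₂]
            have : j + 1 + us.length + 1 = (j + us.length + 1) + 1 := by omega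
            rw [this]
            exact pre_zero _ _ _
          rw [extT_jmpstep0 (k := j + us.length + 1) h20 d]
          have hpos : us.length + 1 + (j + 1) = j + us.length + 1 + 1 := by
            omega
          rw [hpos]
          exact extT_tail_agree hagr d _ (by omega)
      · exact extT_tail_agree hagr d p hp
  | pga7 us l =>
    refine ⟨rfl, ?_⟩
    intro τ d p
    rw [app_inf (toL_rep _) τ, app_inf (toL_rep _) τ,
      inst_rep_fin (toL_nel _ _), inst_rep_fin (toL_nel _ _)]
    set c := us.length + 1 with hc
    set L₁ := jmp (l + us.length + 1) :: us with hL₁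
    set L₂ := jmp l :: us with hL₂
    have H : MatH (cyc L₁) (cyc L₂) (fun p q => p % c = q % c) := by
      intro p q hR
      cases hr0 : p % c with
      | zero =>
        have hq0 : q % c = 0 := by rw [← hR, hr0]
        have h₁ : cyc L₁ p = some (jmp (l + us.length + 1)) := cyc_cons_zero hr0
        have h₂ : cyc L₂ q = some (jmp l) := cyc_cons_zero hq0
        cases l with
        | zero =>
          left
          intro d
          have hnores : ¬ ∃ r, Res (cyc L₁) p r := by
            have key : ∀ p' r', Steps (cyc L₁) p' r' → p' % c = 0 → r' % c = 0 := by
              intro p' r' hst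
              induction hst with
              | refl => exact id
              | @tail a b r'' hs _ ih =>
                intro h0
                obtain ⟨j, hj, rfl⟩ := stepJ_some hs
                have hja : cyc L₁ a = some (jmp (0 + us.length + 1)) := cyc_cons_zero h0
                rw [hj] at hja
                injection hja with e
                injection e with e'
                apply ih
                have : j + 1 = c := by omega
                rw [this, Nat.add_mod_right]
                exact h0
            rintro ⟨r', hst, hh⟩
            have hr' : r' % c = 0 := key p r' hst hr0
            have h3 : cyc L₁ r' = some (jmp (0 + us.length + 1)) := cyc_cons_zero hr'
            have h4 : cyc L₁ r' = some (jmp (us.length + 1)) := by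
              rw [h3, show 0 + us.length + 1 = us.length + 1 from by omega]
            have hstep := stepJ_jmp (k := us.length) h4
            have hh' : stepJ (cyc L₁) r' = none := hh
            rw [hh'] at hstep
            exact absurd hstep (by simp)
          rw [extT_nores hnores d, extT_jmp0 h₂ d]
        | succ j =>
          right
          refine Or.inr (Or.inr (Or.inr ⟨j + us.length + 1, j, ?_, h₂, ?_⟩))
          · rw [h₁, show j + 1 + us.length + 1 = j + us.length + 1 + 1 from by omega]
          · show (p + (j + us.length + 1 + 1)) % c = (q + (j + 1)) % c
            have e1 : p + (j + us.length + 1 + 1) = (p + (j + 1)) + c := by omega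
            rw [e1, Nat.add_mod_right]
            exact mod_add_cong hR
      | succ m =>
        have hmc : m < us.length := by
          have := Nat.mod_lt p (show 0 < c by omega)
          omega
        have hq0 : q % c = m + 1 := by rw [← hR, hr0]
        have h₁ : cyc L₁ p = some us[m] := by
          rw [cyc_cons_succ hr0, List.getElem?_eq_getElem hmc]
        have h₂ : cyc L₂ q = some us[m] := by
          rw [cyc_cons_succ hq0, List.getElem?_eq_getElem hmc]
        right
        cases hu : us[m] with
        | jmp i =>
          cases i with
          | zero => exact Or.inr (Or.inr (Or.inl ⟨hu ▸ h₁, hu ▸ h₂⟩))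
          | succ i =>
            exact Or.inr (Or.inr (Or.inr ⟨i, i, hu ▸ h₁, hu ▸ h₂, mod_add_cong hR⟩))
        | basic a =>
          exact Or.inr (Or.inl ⟨basic a, hu ▸ h₁, hu ▸ h₂, by simp,
            mod_add_cong hR, mod_add_cong hR⟩)
        | ptst a =>
          exact Or.inr (Or.inl ⟨ptst a, hu ▸ h₁, hu ▸ h₂, by simp,
            mod_add_cong hR, mod_add_cong hR⟩)
        | ntst a =>
          exact Or.inr (Or.inl ⟨ntst a, hu ▸ h₁, hu ▸ h₂, by simp,
            mod_add_cong hR, mod_add_cong hR⟩)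
        | halt =>
          exact Or.inr (Or.inl ⟨PInstr.halt, hu ▸ h₁, hu ▸ h₂, by simp,
            mod_add_cong hR, mod_add_cong hR⟩)
    exact lbisim H d p p rfl
  | pga8 us v vs l =>
    have ht1 : toL (ISTm.cat (jmp (l + us.length + vs.length + 2) :: us)
        (ISTm.rep (ISTm.nel v vs))) = none := by
      rw [toL_cat, toL_rep]
      rfl
    have ht2 : toL (ISTm.cat (jmp (l + us.length + 1) :: us)
        (ISTm.rep (ISTm.nel v vs))) = none := by
      rw [toL_cat, toL_rep]
      rfl
    refine ⟨by rw [ht1, ht2], ?_⟩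
    intro τ d p
    rw [app_inf ht1 τ, app_inf ht2 τ]
    have hR : inst (ISTm.rep (ISTm.nel v vs)) = cyc (v :: vs) :=
      inst_rep_fin (toL_nel _ _)
    have hs1 : ∀ n, inst (ISTm.cat (jmp (l + us.length + vs.length + 2) :: us)
        (ISTm.rep (ISTm.nel v vs))) n
        = pre (jmp (l + us.length + vs.length + 2) :: us) (cyc (v :: vs)) n := by
      intro n
      rw [inst_cat_inf (toL_rep _) _ n, hR]
    have hs2 : ∀ n, inst (ISTm.cat (jmp (l + us.length + 1) :: us)
        (ISTm.rep (ISTm.nel v vs))) n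
        = pre (jmp (l + us.length + 1) :: us) (cyc (v :: vs)) n := by
      intro n
      rw [inst_cat_inf (toL_rep _) _ n, hR]
    rw [extT_fun_congr hs1 d p, extT_fun_congr hs2 d p]
    set σ₁ : St A := pre (jmp (l + us.length + vs.length + 2) :: us) (cyc (v :: vs)) with hσ₁
    set σ₂ : St A := pre (jmp (l + us.length + 1) :: us) (cyc (v :: vs)) with hσ₂
    have hagr : ∀ n, 1 ≤ n → σ₁ n = σ₂ n := by
      rintro (_ | m) h1
      · omega
      · rw [hσ₁, hσ₂, pre_succ, pre_succ]
    rcases Nat.eq_zero_or_pos p with rfl | hp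
    · have h10 : σ₁ 0 = some (jmp ((l + us.length + vs.length + 1) + 1)) := by
        rw [hσ₁]
        have : l + us.length + vs.length + 2 = (l + us.length + vs.length + 1) + 1 := by
          omega
        rw [this]
        exact pre_zero _ _ _
      have h20 : σ₂ 0 = some (jmp ((l + us.length) + 1)) := by
        rw [hσ₂]
        exact pre_zero _ _ _
      rw [extT_jmpstep0 (k := l + us.length + vs.length + 1) h10 d,
        extT_jmpstep0 (k := l + us.length) h20 d]
      have hper : ∀ n, us.length + 1 ≤ n → σ₂ (n + (vs.length + 1)) = σ₂ n := by
        intro n hn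
        rw [hσ₂]
        have hlen : (jmp (l + us.length + 1) :: us).length = us.length + 1 := by simp
        rw [pre_ge (by rw [hlen]; omega), pre_ge (by rw [hlen]; omega), hlen]
        have : n + (vs.length + 1) - (us.length + 1)
            = (n - (us.length + 1)) + (v :: vs).length := by simp; omega
        rw [this, cyc_period]
      have hp2 : extT σ₂ d ((l + us.length + 1) + (vs.length + 1))
          = extT σ₂ d (l + us.length + 1) :=
        extT_period hper (by omega) d
      have he : l + us.length + vs.length + 1 + 1
          = (l + us.length + 1) + (vs.length + 1) := by omega
      rw [he, ← hp2]
      exact extT_tail_agree hagr d _ (by omega)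
    · exact extT_tail_agree hagr d p hp

end PGAAux

namespace PGAAux
open PInstr
variable {A : Type}

noncomputable def sem : TT A → ℕ → FT A
  | .D, _ => .D
  | .S, d => match d with | 0 => .D | _+1 => .S
  | .pcc x a y, d => match d with | 0 => .D | d+1 => .pcc (sem x d) a (sem y d)
  | .proj n x, d => sem x (min n d)
  | .extr t, d => extT (inst t) d 0

lemma sem_D (d : ℕ) : sem (.D : TT A) d = .D := rfl
lemma sem_S_zero : sem (.S : TT A) 0 = .D := rfl
lemma sem_S_succ (d : ℕ) : sem (.S : TT A) (d+1) = .S := rfl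
lemma sem_pcc_zero (x y : TT A) (a : A) : sem (.pcc x a y) 0 = .D := rfl
lemma sem_pcc_succ (x y : TT A) (a : A) (d : ℕ) :
    sem (.pcc x a y) (d+1) = .pcc (sem x d) a (sem y d) := rfl
lemma sem_proj (n : ℕ) (x : TT A) (d : ℕ) : sem (.proj n x) d = sem x (min n d) := rfl
lemma sem_extr (t : ISTm A) (d : ℕ) : sem (.extr t) d = extT (inst t) d 0 := rfl

lemma sem_zero (x : TT A) : sem x 0 = .D := by
  induction x with
  | D => rfl
  | S => rfl
  | pcc x a y ihx ihy => rfl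
  | proj n x ih => rw [sem_proj, Nat.min_zero, ih]
  | extr t => rfl

lemma inst_ins_zero (u : PInstr A) : inst (ISTm.ins u) 0 = some u := rfl
lemma inst_ins_succ (u : PInstr A) (m : ℕ) : inst (ISTm.ins u) (m+1) = none := rfl
lemma inst_seq_ins (u : PInstr A) (X : ISTm A) :
    inst (ISTm.seq (ISTm.ins u) X) = pre [u] (inst X) :=
  inst_seq_fin rfl

lemma extT_pre_cons (u : PInstr A) (L τ) (d m : ℕ) :
    extT (pre (u :: L) τ) d (m+1) = extT (pre L τ) d m := by
  have h1 : extT (pre (u :: L) τ) d (m+1) = extT (shf (pre (u :: L) τ) 1) d m := by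
    have := extT_shf (ι := pre (u :: L) τ) (k := 1) d m
    rwa [show m + 1 = m + 1 from rfl] at this
  rw [h1]
  refine extT_fun_congr (fun n => ?_) d m
  show pre (u :: L) τ (n + 1) = pre L τ n
  rw [pre_succ]

lemma extT_pre_one (u : PInstr A) (τ) (d m : ℕ) :
    extT (pre [u] τ) d (m+1) = extT τ d m := by
  rw [extT_pre_cons]
  exact extT_fun_congr (pre_nil τ) d m

lemma extT_res_self {ι : St A} {p : ℕ} {u : PInstr A} (h : ι p = some u)
    (hnj : ∀ k, u ≠ jmp k) (d : ℕ) :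
    extT ι (d+1) p = extHead ι (extT ι d) p :=
  extT_succ_some (resolve_eq ⟨Steps.refl _, halted_nonjump h hnj⟩)

theorem eqT_sound {x y : TT A} (h : EqT x y) : ∀ d, sem x d = sem y d := by
  induction h with
  | refl x => exact fun _ => rfl
  | symm _ ih => exact fun d => (ih d).symm
  | trans _ _ ih1 ih2 => exact fun d => (ih1 d).trans (ih2 d)
  | pccCongr a _ _ ihx ihy =>
    rintro (_ | d)
    · rfl
    · rw [sem_pcc_succ, sem_pcc_succ, ihx d, ihy d]
  | projCongr n _ ih =>
    intro d
    rw [sem_proj, sem_proj, ih]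
  | extrCongr h =>
    intro d
    rw [sem_extr, sem_extr, ← app_bot, ← app_bot]
    exact (eqI_sinv h).2 _ d 0
  | te1 a =>
    rintro (_ | d)
    · rfl
    · rw [sem_extr, extT_res_self (inst_ins_zero (basic a)) (by simp) d,
        extHead_basic _ (inst_ins_zero (basic a)),
        extT_none (inst_ins_succ _ 0) d, sem_pcc_succ]
      rfl
  | te2 a X =>
    rintro (_ | d)
    · rfl
    · rw [sem_extr, inst_seq_ins, extT_res_self (pre_zero (basic a) [] (inst X)) (by simp) d,
        extHead_basic _ (pre_zero _ _ _), extT_pre_one _ _ d 0, sem_pcc_succ]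
      rfl
  | te3 a =>
    rintro (_ | d)
    · rfl
    · rw [sem_extr, extT_res_self (inst_ins_zero (ptst a)) (by simp) d,
        extHead_ptst _ (inst_ins_zero (ptst a)),
        extT_none (inst_ins_succ _ 0) d, extT_none (inst_ins_succ _ 1) d, sem_pcc_succ]
      rfl
  | te4 a X =>
    rintro (_ | d)
    · rfl
    · rw [sem_extr, inst_seq_ins, extT_res_self (pre_zero (ptst a) [] (inst X)) (by simp) d,
        extHead_ptst _ (pre_zero _ _ _), extT_pre_one _ _ d 0, extT_pre_one _ _ d 1,
        sem_pcc_succ, sem_extr, sem_extr, inst_seq_ins,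
        extT_jmpstep0 (k := 1) (pre_zero _ _ _) d, extT_pre_one _ _ d 1]
  | te5 a =>
    rintro (_ | d)
    · rfl
    · rw [sem_extr, extT_res_self (inst_ins_zero (ntst a)) (by simp) d,
        extHead_ntst _ (inst_ins_zero (ntst a)),
        extT_none (inst_ins_succ _ 0) d, extT_none (inst_ins_succ _ 1) d, sem_pcc_succ]
      rfl
  | te6 a X =>
    rintro (_ | d)
    · rfl
    · rw [sem_extr, inst_seq_ins, extT_res_self (pre_zero (ntst a) [] (inst X)) (by simp) d,
        extHead_ntst _ (pre_zero _ _ _), extT_pre_one _ _ d 0, extT_pre_one _ _ d 1,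
        sem_pcc_succ, sem_extr, sem_extr, inst_seq_ins,
        extT_jmpstep0 (k := 1) (pre_zero _ _ _) d, extT_pre_one _ _ d 1]
  | te7 l =>
    intro d
    rw [sem_extr, sem_D]
    cases l with
    | zero => exact extT_jmp0 (inst_ins_zero (jmp 0)) d
    | succ k =>
      rw [extT_jmpstep0 (k := k) (inst_ins_zero (jmp (k+1))) d]
      exact extT_none (inst_ins_succ _ k) d
  | te8 X =>
    intro d
    rw [sem_extr, sem_D, inst_seq_ins]
    exact extT_jmp0 (pre_zero _ _ _) d
  | te9 X =>
    intro d
    rw [sem_extr, sem_extr, inst_seq_ins,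
      extT_jmpstep0 (k := 0) (pre_zero _ _ _) d, extT_pre_one _ _ d 0]
  | te10 l u =>
    intro d
    rw [sem_extr, sem_D, inst_seq_ins,
      extT_jmpstep0 (k := l + 1) (pre_zero _ _ _) d, extT_pre_one _ _ d (l+1)]
    exact extT_none (inst_ins_succ _ l) d
  | te11 l u X =>
    intro d
    rw [sem_extr, sem_extr, inst_seq_ins, inst_seq_ins,
      extT_jmpstep0 (k := l + 1) (pre_zero _ _ _) d, extT_pre_one _ _ d (l+1),
      inst_seq_ins, extT_pre_cons u [] (inst X) d l,
      extT_jmpstep0 (k := l) (pre_zero _ _ _) d, extT_pre_one _ _ d l]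
    exact extT_fun_congr (pre_nil (inst X)) d l
  | te12 =>
    rintro (_ | d)
    · rfl
    · rw [sem_extr, extT_res_self (inst_ins_zero PInstr.halt) (by simp) d,
        extHead_halt _ (inst_ins_zero PInstr.halt), sem_S_succ]
  | te13 X =>
    rintro (_ | d)
    · rfl
    · rw [sem_extr, inst_seq_ins,
        extT_res_self (pre_zero PInstr.halt [] (inst X)) (by simp) d,
        extHead_halt _ (pre_zero _ _ _), sem_S_succ]
  | pr1 x =>
    intro d
    rw [sem_proj, Nat.zero_min, sem_zero, sem_D]
  | pr2 n =>
    intro d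
    rfl
  | pr3 n =>
    rintro (_ | d)
    · rfl
    · rw [sem_proj, sem_S_succ]
      have : min (n+1) (d+1) = (min n d) + 1 := Nat.succ_min_succ n d
      rw [this, sem_S_succ]
  | pr4 n x y a =>
    rintro (_ | d)
    · rfl
    · rw [sem_proj, Nat.succ_min_succ, sem_pcc_succ, sem_pcc_succ, sem_proj, sem_proj]
  | @aip x y h ih =>
    intro d
    have := ih d d
    rwa [sem_proj, sem_proj, Nat.min_self] at this

end PGAAux

namespace PGAAux
open PInstr
variable {A : Type}

/-- non-empty list to term (junk value on `[]`) -/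
def nelL : List (PInstr A) → ISTm A
  | [] => .ins PInstr.halt
  | u :: us => ISTm.nel u us

lemma cat_append (L M : List (PInstr A)) (Y : ISTm A) :
    ISTm.cat (L ++ M) Y = ISTm.cat L (ISTm.cat M Y) := by
  induction L with
  | nil => rfl
  | cons u us ih =>
    show ISTm.seq (.ins u) (ISTm.cat (us ++ M) Y) = ISTm.seq (.ins u) (ISTm.cat us (ISTm.cat M Y))
    rw [ih]

lemma cat_congr {Y Y' : ISTm A} (h : EqI Y Y') (L : List (PInstr A)) :
    EqI (ISTm.cat L Y) (ISTm.cat L Y') := by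
  induction L with
  | nil => exact h
  | cons u us ih => exact EqI.seqCongr (EqI.refl _) ih

lemma nelL_cat (Z : ISTm A) : ∀ (L : List (PInstr A)), L ≠ [] →
    EqI (.seq (nelL L) Z) (ISTm.cat L Z) := by
  intro L
  induction L with
  | nil => intro h; exact absurd rfl h
  | cons u us ih =>
    intro _
    cases us with
    | nil => exact EqI.refl _
    | cons v vs =>
      show EqI (.seq (.seq (.ins u) (ISTm.nel v vs)) Z) _
      refine EqI.trans (EqI.pga1 _ _ _) ?_
      exact EqI.seqCongr (EqI.refl _) (ih (by simp))

lemma cat_seq (Z Y : ISTm A) : ∀ (L : List (PInstr A)),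
    EqI (.seq (ISTm.cat L Y) Z) (ISTm.cat L (.seq Y Z)) := by
  intro L
  induction L with
  | nil => exact EqI.refl _
  | cons u us ih =>
    refine EqI.trans (EqI.pga1 _ _ _) ?_
    exact EqI.seqCongr (EqI.refl _) ih

lemma rep_rep (w : ISTm A) : EqI (.rep (.rep w)) (.rep w) := by
  have h1 : EqI (.rep ((ISTm.rep w).pw 1)) (.rep (.rep w)) := EqI.pga2 (.rep w) 1
  have h2 : (ISTm.rep w).pw 1 = .seq (.rep w) (.rep w) := rfl
  rw [h2] at h1
  refine EqI.trans h1.symm ?_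
  refine EqI.trans (EqI.pga4 _ _) ?_
  exact EqI.pga3 _ _

lemma nelL_append : ∀ (L M : List (PInstr A)), L ≠ [] → M ≠ [] →
    EqI (.seq (nelL L) (nelL M)) (nelL (L ++ M)) := by
  intro L
  induction L with
  | nil => intro M h; exact absurd rfl h
  | cons u us ih =>
    intro M _ hM
    cases us with
    | nil =>
      cases M with
      | nil => exact absurd rfl hM
      | cons v vs => exact EqI.refl _
    | cons w ws =>
      show EqI (.seq (.seq (.ins u) (ISTm.nel w ws)) (nelL M)) _
      refine EqI.trans (EqI.pga1 _ _ _) ?_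
      have h2 : EqI (.seq (ISTm.nel w ws) (nelL M)) (nelL ((w :: ws) ++ M)) :=
        ih M (by simp) hM
      refine EqI.trans (EqI.seqCongr (EqI.refl _) h2) ?_
      exact EqI.refl _

lemma canonFin : ∀ (t : ISTm A) (L : List (PInstr A)), toL t = some L → EqI t (nelL L) := by
  intro t
  induction t with
  | ins u =>
    intro L h
    simp [toL] at h
    subst h
    exact EqI.refl _
  | seq s t ihs iht =>
    intro L h
    cases hs : toL s with
    | none => rw [toL_seq_none₁ hs] at h; exact absurd h (by simp)
    | some Ls =>
      cases ht : toL t with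
      | none => rw [toL_seq_none₂ hs ht] at h; exact absurd h (by simp)
      | some Lt =>
        rw [toL_seq_some hs ht] at h
        injection h with e
        subst e
        refine EqI.trans (EqI.seqCongr (ihs Ls hs) (iht Lt ht)) ?_
        exact nelL_append Ls Lt (toL_ne_nil hs) (toL_ne_nil ht)
  | rep t ih =>
    intro L h
    rw [toL_rep] at h
    exact absurd h (by simp)

lemma canonInf : ∀ (t : ISTm A), toL t = none →
    ∃ (us : List (PInstr A)) (w : PInstr A) (ws : List (PInstr A)),
      EqI t (ISTm.cat us (.rep (ISTm.nel w ws))) := by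
  intro t
  induction t with
  | ins u => intro h; simp [toL] at h
  | seq s t ihs iht =>
    intro h
    cases hs : toL s with
    | none =>
      obtain ⟨us, w, ws, hEq⟩ := ihs hs
      refine ⟨us, w, ws, ?_⟩
      refine EqI.trans (EqI.seqCongr hEq (EqI.refl t)) ?_
      refine EqI.trans (cat_seq _ _ us) ?_
      exact cat_congr (EqI.pga3 _ _) us
    | some Ls =>
      have ht : toL t = none := by
        cases ht : toL t with
        | none => rfl
        | some Lt => rw [toL_seq_some hs ht] at h; exact absurd h (by simp)
      obtain ⟨vs, w, ws, hEq⟩ := iht ht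
      refine ⟨Ls ++ vs, w, ws, ?_⟩
      refine EqI.trans (EqI.seqCongr (canonFin s Ls hs) hEq) ?_
      rw [cat_append]
      exact nelL_cat _ Ls (toL_ne_nil hs)
  | rep s ih =>
    intro _
    cases hs : toL s with
    | some Ls =>
      obtain ⟨u, us, rfl⟩ : ∃ u us, Ls = u :: us := by
        cases Ls with
        | nil => exact absurd rfl (toL_ne_nil hs)
        | cons u us => exact ⟨u, us, rfl⟩
      exact ⟨[], u, us, EqI.repCongr (canonFin s _ hs)⟩
    | none =>
      obtain ⟨us, w, ws, hEq⟩ := ih hs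
      cases us with
      | nil =>
        exact ⟨[], w, ws, EqI.trans (EqI.repCongr hEq) (rep_rep _)⟩
      | cons u us' =>
        refine ⟨u :: us', w, ws, ?_⟩
        refine EqI.trans (EqI.repCongr hEq) ?_
        set P := nelL (u :: us') with hP
        set R : ISTm A := .rep (ISTm.nel w ws) with hR
        have h1 : EqI (ISTm.cat (u :: us') R) (.seq P R) := (nelL_cat R _ (by simp)).symm
        refine EqI.trans (EqI.repCongr h1) ?_
        refine EqI.trans (EqI.pga4 P R) ?_
        have h2 : EqI (.rep (.seq R P)) R := by
          refine EqI.trans (EqI.repCongr (EqI.pga3 _ _)) ?_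
          exact rep_rep _
        refine EqI.trans (EqI.seqCongr (EqI.refl P) h2) ?_
        exact nelL_cat R _ (by simp)

end PGAAux

namespace PGAAux
open PInstr
variable {A : Type}

inductive Tr (A : Type) where
  | leafD : Tr A
  | leafS : Tr A
  | exit : ℕ → Tr A
  | node : A → Tr A → Tr A → Tr A

def tree : List (PInstr A) → ℕ → Tr A
  | [], 0 => .leafD
  | [], l+1 => .exit l
  | _ :: _, 0 => .leafD
  | u :: us, 1 =>
    match u with
    | basic a => .node a (tree us 1) (tree us 1)
    | ptst a => .node a (tree us 1) (tree us 2)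
    | ntst a => .node a (tree us 2) (tree us 1)
    | jmp k => tree us k
    | PInstr.halt => .leafS
  | _ :: us, l+2 => tree us (l+1)

def fill : Tr A → (ℕ → TT A) → TT A
  | .leafD, _ => .D
  | .leafS, _ => .S
  | .exit k, H => H k
  | .node a t₁ t₂, H => .pcc (fill t₁ H) a (fill t₂ H)

lemma fill_congr {H H' : ℕ → TT A} (h : ∀ k, EqT (H k) (H' k)) :
    ∀ (T : Tr A), EqT (fill T H) (fill T H')
  | .leafD => EqT.refl _
  | .leafS => EqT.refl _
  | .exit k => h k
  | .node a t₁ t₂ => EqT.pccCongr a (fill_congr h t₁) (fill_congr h t₂)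

def NoExit : Tr A → Prop
  | .leafD => True
  | .leafS => True
  | .exit _ => False
  | .node _ t₁ t₂ => NoExit t₁ ∧ NoExit t₂

lemma fill_noExit (H H' : ℕ → TT A) :
    ∀ (T : Tr A), NoExit T → EqT (fill T H) (fill T H')
  | .leafD, _ => EqT.refl _
  | .leafS, _ => EqT.refl _
  | .exit k, h => absurd h (by simp [NoExit])
  | .node a t₁ t₂, h =>
      EqT.pccCongr a (fill_noExit H H' t₁ h.1) (fill_noExit H H' t₂ h.2)

/-- Unfolding thread extraction of `#l ; u₁ ; ⋯ ; uₖ ; Y` into a finite tree over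
entry behaviours of `Y`. -/
lemma unfold_cat : ∀ (us : List (PInstr A)) (l : ℕ) (Y : ISTm A),
    EqT (.extr (.seq (.ins (jmp l)) (ISTm.cat us Y)))
      (fill (tree us l) (fun k => .extr (.seq (.ins (jmp (k+1))) Y))) := by
  intro us
  induction us with
  | nil =>
    rintro (_ | l) Y
    · exact EqT.te8 _
    · exact EqT.refl _
  | cons u us ih =>
    rintro (_ | _ | l) Y
    · exact EqT.te8 _
    · -- l = 1
      refine EqT.trans (EqT.te9 _) ?_
      cases u with
      | basic a =>
        refine EqT.trans (EqT.te2 a _) ?_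
        show EqT _ (fill (.node a (tree us 1) (tree us 1)) _)
        have h1 : EqT (.extr (ISTm.cat us Y))
            (fill (tree us 1) (fun k => .extr (.seq (.ins (jmp (k+1))) Y))) :=
          EqT.trans (EqT.symm (EqT.te9 _)) (ih 1 Y)
        exact EqT.pccCongr a h1 h1
      | ptst a =>
        refine EqT.trans (EqT.te4 a _) ?_
        show EqT _ (fill (.node a (tree us 1) (tree us 2)) _)
        have h1 : EqT (.extr (ISTm.cat us Y))
            (fill (tree us 1) (fun k => .extr (.seq (.ins (jmp (k+1))) Y))) :=
          EqT.trans (EqT.symm (EqT.te9 _)) (ih 1 Y)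
        exact EqT.pccCongr a h1 (ih 2 Y)
      | ntst a =>
        refine EqT.trans (EqT.te6 a _) ?_
        show EqT _ (fill (.node a (tree us 2) (tree us 1)) _)
        have h1 : EqT (.extr (ISTm.cat us Y))
            (fill (tree us 1) (fun k => .extr (.seq (.ins (jmp (k+1))) Y))) :=
          EqT.trans (EqT.symm (EqT.te9 _)) (ih 1 Y)
        exact EqT.pccCongr a (ih 2 Y) h1
      | jmp k =>
        show EqT _ (fill (tree us k) _)
        exact ih k Y
      | halt =>
        exact EqT.te13 _
    · -- l + 2
      refine EqT.trans (EqT.te11 l u (ISTm.cat us Y)) ?_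
      show EqT _ (fill (tree us (l+1)) _)
      exact ih (l+1) Y

/-- Tail-less unfolding: all exits are inaction. -/
lemma unfold_nel : ∀ (us : List (PInstr A)) (u : PInstr A) (l : ℕ),
    EqT (.extr (.seq (.ins (jmp l)) (ISTm.nel u us)))
      (fill (tree (u :: us) l) (fun _ => (.D : TT A))) := by
  intro us
  induction us with
  | nil =>
    rintro u (_ | _ | l)
    · exact EqT.te8 _
    · refine EqT.trans (EqT.te9 _) ?_
      cases u with
      | basic a =>
        refine EqT.trans (EqT.te1 a) ?_
        exact EqT.refl _
      | ptst a => exact EqT.te3 a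
      | ntst a => exact EqT.te5 a
      | jmp k =>
        refine EqT.trans (EqT.te7 k) ?_
        show EqT (.D : TT A) (fill (tree ([] : List (PInstr A)) k) _)
        cases k with
        | zero => exact EqT.refl _
        | succ j => exact EqT.refl _
      | halt => exact EqT.te12
    · refine EqT.trans (EqT.te10 l u) ?_
      exact EqT.refl _
  | cons v vs ih =>
    rintro u (_ | _ | l)
    · exact EqT.te8 _
    · refine EqT.trans (EqT.te9 _) ?_
      show EqT (.extr (.seq (.ins u) (ISTm.nel v vs))) _
      cases u with
      | basic a =>
        refine EqT.trans (EqT.te2 a _) ?_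
        show EqT _ (fill (.node a (tree (v :: vs) 1) (tree (v :: vs) 1)) _)
        have h1 : EqT (.extr (ISTm.nel v vs)) (fill (tree (v :: vs) 1) (fun _ => (.D : TT A))) :=
          EqT.trans (EqT.symm (EqT.te9 _)) (ih v 1)
        exact EqT.pccCongr a h1 h1
      | ptst a =>
        refine EqT.trans (EqT.te4 a _) ?_
        show EqT _ (fill (.node a (tree (v :: vs) 1) (tree (v :: vs) 2)) _)
        have h1 : EqT (.extr (ISTm.nel v vs)) (fill (tree (v :: vs) 1) (fun _ => (.D : TT A))) :=
          EqT.trans (EqT.symm (EqT.te9 _)) (ih v 1)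
        exact EqT.pccCongr a h1 (ih v 2)
      | ntst a =>
        refine EqT.trans (EqT.te6 a _) ?_
        show EqT _ (fill (.node a (tree (v :: vs) 2) (tree (v :: vs) 1)) _)
        have h1 : EqT (.extr (ISTm.nel v vs)) (fill (tree (v :: vs) 1) (fun _ => (.D : TT A))) :=
          EqT.trans (EqT.symm (EqT.te9 _)) (ih v 1)
        exact EqT.pccCongr a (ih v 2) h1
      | jmp k =>
        show EqT _ (fill (tree (v :: vs) k) _)
        exact ih v k
      | halt => exact EqT.te13 _
    · refine EqT.trans (EqT.te11 l u (ISTm.nel v vs)) ?_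
      show EqT _ (fill (tree (v :: vs) (l+1)) _)
      exact ih v (l+1)

end PGAAux

namespace PGAAux
open PInstr
variable {A : Type}

def ftfill : Tr A → (ℕ → ℕ → FT A) → ℕ → FT A
  | .leafD, _, _ => .D
  | .leafS, _, d => match d with | 0 => .D | _+1 => .S
  | .exit k, E, d => E k d
  | .node a t₁ t₂, E, d =>
    match d with
    | 0 => .D
    | d+1 => .pcc (ftfill t₁ E d) a (ftfill t₂ E d)

lemma ftfill_node_succ (a : A) (t₁ t₂ E d) :
    ftfill (.node a t₁ t₂) E (d+1) = .pcc (ftfill t₁ E d) a (ftfill t₂ E d) := rfl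

lemma ftfill_congr {E E' : ℕ → ℕ → FT A} (h : ∀ k d, E k d = E' k d) :
    ∀ (T : Tr A) (d : ℕ), ftfill T E d = ftfill T E' d := by
  intro T
  induction T with
  | leafD => intro d; rfl
  | leafS => intro d; rfl
  | exit k => intro d; exact h k d
  | node a t₁ t₂ ih1 ih2 =>
    rintro (_ | d)
    · rfl
    · rw [ftfill_node_succ, ftfill_node_succ, ih1, ih2]

lemma sem_fill (H : ℕ → TT A) : ∀ (T : Tr A) (d : ℕ),
    sem (fill T H) d = ftfill T (fun k => sem (H k)) d := by
  intro T
  induction T with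
  | leafD => intro d; rfl
  | leafS => intro d; rfl
  | exit k => intro d; rfl
  | node a t₁ t₂ ih1 ih2 =>
    rintro (_ | d)
    · rfl
    · show sem (.pcc (fill t₁ H) a (fill t₂ H)) (d+1) = _
      rw [sem_pcc_succ, ftfill_node_succ, ih1, ih2]

/-- entry behaviours of `!ⁿ` tails: termination iff the entry point is within range. -/
def En (n : ℕ) : ℕ → ℕ → FT A := fun k d =>
  if k < n then (match d with | 0 => .D | _+1 => .S) else .D

lemma toL_halts : ∀ (m : ℕ), toL (halts m : ISTm A) = some (List.replicate (m+1) PInstr.halt) := by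
  intro m
  induction m with
  | zero => rfl
  | succ m ih =>
    show toL (ISTm.seq (.ins PInstr.halt) (halts m)) = _
    rw [toL_seq_some (s := ISTm.ins (PInstr.halt : PInstr A)) (L := [PInstr.halt]) rfl ih]
    congr 1

lemma ft_leafD (E : ℕ → ℕ → FT A) (d : ℕ) : ftfill .leafD E d = .D := rfl
lemma ft_leafS_succ (E : ℕ → ℕ → FT A) (d : ℕ) : ftfill .leafS E (d+1) = .S := rfl
lemma ft_exit (k : ℕ) (E : ℕ → ℕ → FT A) (d : ℕ) : ftfill (.exit k) E d = E k d := rfl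

lemma En_lt {k n : ℕ} (h : k < n) (d : ℕ) : (En n : ℕ → ℕ → FT A) k (d+1) = .S := by
  simp [En, h]

lemma En_ge {k n : ℕ} (h : n ≤ k) (d : ℕ) : (En n : ℕ → ℕ → FT A) k d = .D := by
  simp [En, Nat.not_lt.mpr h]

lemma En_d0 (n k : ℕ) : (En n : ℕ → ℕ → FT A) k 0 = .D := by
  simp [En]

lemma sem_halts_probe (k m : ℕ) : ∀ d,
    sem (.extr (.seq (.ins (jmp (k+1))) (halts m)) : TT A) d = En (m+1) k d := by
  intro d
  rw [sem_extr, inst_seq_ins, extT_jmpstep0 (k := k) (pre_zero _ _ _) d]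
  have h1 : extT (pre [jmp (k+1)] (inst (halts m : ISTm A))) d (k+1)
      = extT (inst (halts m : ISTm A)) d k := extT_pre_one _ _ d k
  rw [h1]
  rcases Nat.lt_or_ge k (m+1) with h | h
  · have h2 : inst (halts m : ISTm A) k = some PInstr.halt := by
      rw [instFin (toL_halts m) k, List.getElem?_eq_getElem (by simp; omega)]
      simp
    cases d with
    | zero => rw [En_d0]; rfl
    | succ d =>
      rw [extT_res_self h2 (by simp) d, extHead_halt _ h2, En_lt h]
  · have h2 : inst (halts m : ISTm A) k = none := by
      rw [instFin (toL_halts m) k, List.getElem?_eq_none (by simp; omega)]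
    rw [extT_none h2 d, En_ge h]

lemma En_zero (k d : ℕ) : (En 0 : ℕ → ℕ → FT A) k d = .D := En_ge (Nat.zero_le k) d

/-- Tree reconstruction: the `!ⁿ`-probed behaviours determine the tree. -/
lemma tree_inj : ∀ (T T' : Tr A),
    (∀ n d, ftfill T (En n) d = ftfill T' (En n) d) → T = T' := by
  intro T
  induction T with
  | leafD =>
    intro T' h
    cases T' with
    | leafD => rfl
    | leafS =>
      have hc := h 0 1
      rw [ft_leafD, ft_leafS_succ] at hc
      exact absurd hc (by simp)
    | exit k =>
      have hc := h (k+1) 1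
      rw [ft_leafD, ft_exit, En_lt (Nat.lt_succ_self k)] at hc
      exact absurd hc (by simp)
    | node a t₁ t₂ =>
      have hc := h 0 1
      rw [ft_leafD, ftfill_node_succ] at hc
      exact absurd hc (by simp)
  | leafS =>
    intro T' h
    cases T' with
    | leafS => rfl
    | leafD =>
      have hc := h 0 1
      rw [ft_leafD, ft_leafS_succ] at hc
      exact absurd hc (by simp)
    | exit k =>
      have hc := h 0 1
      rw [ft_leafS_succ, ft_exit, En_ge (Nat.zero_le k)] at hc
      exact absurd hc (by simp)
    | node a t₁ t₂ =>
      have hc := h 0 1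
      rw [ft_leafS_succ, ftfill_node_succ] at hc
      exact absurd hc (by simp)
  | exit k =>
    intro T' h
    cases T' with
    | leafD =>
      have hc := h (k+1) 1
      rw [ft_leafD, ft_exit, En_lt (Nat.lt_succ_self k)] at hc
      exact absurd hc (by simp)
    | leafS =>
      have hc := h 0 1
      rw [ft_leafS_succ, ft_exit, En_ge (Nat.zero_le k)] at hc
      exact absurd hc (by simp)
    | exit k' =>
      rcases lt_trichotomy k k' with hlt | heq | hgt
      · have hc := h (k+1) 1
        rw [ft_exit, ft_exit, En_lt (Nat.lt_succ_self k), En_ge (by omega)] at hc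
        exact absurd hc (by simp)
      · rw [heq]
      · have hc := h (k'+1) 1
        rw [ft_exit, ft_exit, En_ge (by omega), En_lt (by omega)] at hc
        exact absurd hc (by simp)
    | node a t₁ t₂ =>
      have hc := h 0 1
      rw [ft_exit, En_ge (Nat.zero_le k), ftfill_node_succ] at hc
      exact absurd hc (by simp)
  | node a t₁ t₂ ih1 ih2 =>
    intro T' h
    cases T' with
    | leafD =>
      have hc := h 0 1
      rw [ft_leafD, ftfill_node_succ] at hc
      exact absurd hc (by simp)
    | leafS =>
      have hc := h 0 1
      rw [ft_leafS_succ, ftfill_node_succ] at hc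
      exact absurd hc (by simp)
    | exit k =>
      have hc := h 0 1
      rw [ft_exit, En_ge (Nat.zero_le k), ftfill_node_succ] at hc
      exact absurd hc (by simp)
    | node b t₁' t₂' =>
      have hab : a = b := by
        have hc := h 0 1
        rw [ftfill_node_succ, ftfill_node_succ] at hc
        simp only [FT.pcc.injEq] at hc
        exact hc.2.1
      subst hab
      have h1 : ∀ n d, ftfill t₁ (En n) d = ftfill t₁' (En n) d := by
        intro n d
        have hc := h n (d+1)
        rw [ftfill_node_succ, ftfill_node_succ] at hc
        simp only [FT.pcc.injEq] at hc
        exact hc.1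
      have h2 : ∀ n d, ftfill t₂ (En n) d = ftfill t₂' (En n) d := by
        intro n d
        have hc := h n (d+1)
        rw [ftfill_node_succ, ftfill_node_succ] at hc
        simp only [FT.pcc.injEq] at hc
        exact hc.2.2
      rw [ih1 t₁' h1, ih2 t₂' h2]

def hasExit : Tr A → ℕ → Prop
  | .leafD, _ => False
  | .leafS, _ => False
  | .exit k', k => k' = k
  | .node _ t₁ t₂, k => hasExit t₁ k ∨ hasExit t₂ k

lemma noExit_of_not_hasExit : ∀ (T : Tr A), (∀ k, ¬ hasExit T k) → NoExit T := by
  intro T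
  induction T with
  | leafD => intro _; trivial
  | leafS => intro _; trivial
  | exit k => intro h; exact absurd rfl (h k)
  | node a t₁ t₂ ih1 ih2 =>
    intro h
    exact ⟨ih1 (fun k hk => h k (Or.inl hk)), ih2 (fun k hk => h k (Or.inr hk))⟩

lemma exit_sep : ∀ (T : Tr A) (k : ℕ), hasExit T k →
    ∃ d, ftfill T (En (k+1)) d ≠ ftfill T (En 0) d := by
  intro T
  induction T with
  | leafD => intro k h; exact absurd h (by simp [hasExit])
  | leafS => intro k h; exact absurd h (by simp [hasExit])
  | exit k' =>
    intro k h
    have hk : k' = k := h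
    subst hk
    refine ⟨1, ?_⟩
    show En (k'+1) k' 1 ≠ En 0 k' 1
    rw [En_lt (Nat.lt_succ_self k'), En_zero]
    simp
  | node a t₁ t₂ ih1 ih2 =>
    intro k h
    rcases h with h | h
    · obtain ⟨d, hd⟩ := ih1 k h
      refine ⟨d+1, ?_⟩
      rw [ftfill_node_succ, ftfill_node_succ]
      intro hc
      simp only [FT.pcc.injEq] at hc
      exact hd hc.1
    · obtain ⟨d, hd⟩ := ih2 k h
      refine ⟨d+1, ?_⟩
      rw [ftfill_node_succ, ftfill_node_succ]
      intro hc
      simp only [FT.pcc.injEq] at hc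
      exact hd hc.2.2

lemma noExit_of_const {T : Tr A} {C : ℕ → FT A}
    (h : ∀ n d, ftfill T (En n) d = C d) : NoExit T := by
  refine noExit_of_not_hasExit T (fun k hk => ?_)
  obtain ⟨d, hd⟩ := exit_sep T k hk
  exact hd ((h (k+1) d).trans (h 0 d).symm)

end PGAAux

namespace PGAAux
open PInstr
variable {A : Type}

def Hfun : ℕ → ℕ → TT A := fun n k =>
  match n with
  | 0 => .D
  | m+1 => .extr (.seq (.ins (jmp (k+1))) (halts m))

lemma key_fin {t : ISTm A} {L} (hL : toL t = some L) (l n : ℕ) :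
    EqT (.extr (.seq (.ins (jmp l)) (appHalts t n))) (fill (tree L l) (Hfun n)) := by
  obtain ⟨u, us, rfl⟩ : ∃ u us, L = u :: us := by
    cases L with
    | nil => exact absurd rfl (toL_ne_nil hL)
    | cons u us => exact ⟨u, us, rfl⟩
  cases n with
  | zero =>
    refine EqT.trans (EqT.extrCongr (EqI.seqCongr (EqI.refl _) (canonFin t _ hL))) ?_
    exact unfold_nel us u l
  | succ m =>
    have e1 : EqI (appHalts t (m+1)) (ISTm.cat (u :: us) (halts m)) := by
      show EqI (.seq t (halts m)) _
      refine EqI.trans (EqI.seqCongr (canonFin t _ hL) (EqI.refl _)) ?_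
      exact nelL_cat _ _ (by simp)
    refine EqT.trans (EqT.extrCongr (EqI.seqCongr (EqI.refl _) e1)) ?_
    exact unfold_cat (u :: us) l (halts m)

lemma sem_key {t : ISTm A} {L} (hL : toL t = some L) (l n d : ℕ) :
    sem (.extr (.seq (.ins (jmp l)) (appHalts t n))) d = ftfill (tree L l) (En n) d := by
  rw [eqT_sound (key_fin hL l n) d, sem_fill]
  refine ftfill_congr (fun k d => ?_) _ d
  cases n with
  | zero => rw [En_zero]; rfl
  | succ m => exact sem_halts_probe k m d

lemma first_arg_ff {t₁ t₁' : ISTm A} {L₁ L₂} (h₁ : BCong t₁ t₁')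
    (hA : toL t₁ = some L₁) (hB : toL t₁' = some L₂) (Z : ISTm A) (l : ℕ) :
    EqT (.extr (.seq (.ins (jmp l)) (.seq t₁ Z)))
      (.extr (.seq (.ins (jmp l)) (.seq t₁' Z))) := by
  have htree : tree L₁ l = tree L₂ l := by
    apply tree_inj
    intro n d
    rw [← sem_key hA l n d, ← sem_key hB l n d]
    exact eqT_sound (h₁ l n) d
  have e1 : EqI (.seq t₁ Z) (ISTm.cat L₁ Z) :=
    EqI.trans (EqI.seqCongr (canonFin t₁ L₁ hA) (EqI.refl Z))
      (nelL_cat Z L₁ (toL_ne_nil hA))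
  have e2 : EqI (.seq t₁' Z) (ISTm.cat L₂ Z) :=
    EqI.trans (EqI.seqCongr (canonFin t₁' L₂ hB) (EqI.refl Z))
      (nelL_cat Z L₂ (toL_ne_nil hB))
  refine EqT.trans (EqT.extrCongr (EqI.seqCongr (EqI.refl _) e1)) ?_
  refine EqT.trans (unfold_cat L₁ l Z) ?_
  rw [htree]
  refine EqT.trans (EqT.symm (unfold_cat L₂ l Z)) ?_
  exact EqT.symm (EqT.extrCongr (EqI.seqCongr (EqI.refl _) e2))

lemma first_arg_fi {t₁ t₁' : ISTm A} {L₁} (h₁ : BCong t₁ t₁')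
    (hA : toL t₁ = some L₁) (hB : toL t₁' = none) (Z : ISTm A) (l : ℕ) :
    EqT (.extr (.seq (.ins (jmp l)) (.seq t₁ Z)))
      (.extr (.seq (.ins (jmp l)) (.seq t₁' Z))) := by
  obtain ⟨us, w, ws, hC⟩ := canonInf t₁' hB
  set C : ISTm A := ISTm.cat us (.rep (ISTm.nel w ws)) with hCdef
  have habs : ∀ W : ISTm A, EqI (.seq t₁' W) C := by
    intro W
    refine EqI.trans (EqI.seqCongr hC (EqI.refl W)) ?_
    refine EqI.trans (cat_seq W _ us) ?_
    exact cat_congr (EqI.pga3 _ _) us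
  have happ : ∀ n, EqI (appHalts t₁' n) C := by
    intro n
    cases n with
    | zero => exact hC
    | succ m => exact habs (halts m)
  have hnoex : NoExit (tree L₁ l) := by
    refine noExit_of_const (C := fun d => sem (.extr (.seq (.ins (jmp l)) C)) d) ?_
    intro n d
    rw [← sem_key hA l n d]
    exact eqT_sound (EqT.trans (h₁ l n)
      (EqT.extrCongr (EqI.seqCongr (EqI.refl _) (happ n)))) d
  have e1 : EqI (.seq t₁ Z) (ISTm.cat L₁ Z) :=
    EqI.trans (EqI.seqCongr (canonFin t₁ L₁ hA) (EqI.refl Z))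
      (nelL_cat Z L₁ (toL_ne_nil hA))
  have e2 : EqI (appHalts t₁ 1) (ISTm.cat L₁ (halts 0)) := by
    show EqI (.seq t₁ (halts 0)) _
    refine EqI.trans (EqI.seqCongr (canonFin t₁ L₁ hA) (EqI.refl _)) ?_
    exact nelL_cat _ L₁ (toL_ne_nil hA)
  refine EqT.trans (EqT.extrCongr (EqI.seqCongr (EqI.refl _) e1)) ?_
  refine EqT.trans (unfold_cat L₁ l Z) ?_
  refine EqT.trans (fill_noExit _
    (fun k => .extr (.seq (.ins (jmp (k+1))) (halts 0))) _ hnoex) ?_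
  refine EqT.trans (EqT.symm (unfold_cat L₁ l (halts 0))) ?_
  refine EqT.trans (EqT.symm (EqT.extrCongr (EqI.seqCongr (EqI.refl _) e2))) ?_
  refine EqT.trans (h₁ l 1) ?_
  refine EqT.trans (EqT.extrCongr (EqI.seqCongr (EqI.refl _) (happ 1))) ?_
  exact EqT.symm (EqT.extrCongr (EqI.seqCongr (EqI.refl _) (habs Z)))

lemma first_arg_ii {t₁ t₁' : ISTm A} (h₁ : BCong t₁ t₁')
    (hA : toL t₁ = none) (hB : toL t₁' = none) (Z : ISTm A) (l : ℕ) :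
    EqT (.extr (.seq (.ins (jmp l)) (.seq t₁ Z)))
      (.extr (.seq (.ins (jmp l)) (.seq t₁' Z))) := by
  obtain ⟨us, w, ws, hC⟩ := canonInf t₁ hA
  obtain ⟨us', w', ws', hC'⟩ := canonInf t₁' hB
  have habs : ∀ W : ISTm A, EqI (.seq t₁ W) (ISTm.cat us (.rep (ISTm.nel w ws))) := by
    intro W
    refine EqI.trans (EqI.seqCongr hC (EqI.refl W)) ?_
    refine EqI.trans (cat_seq W _ us) ?_
    exact cat_congr (EqI.pga3 _ _) us
  have habs' : ∀ W : ISTm A, EqI (.seq t₁' W) (ISTm.cat us' (.rep (ISTm.nel w' ws'))) := by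
    intro W
    refine EqI.trans (EqI.seqCongr hC' (EqI.refl W)) ?_
    refine EqI.trans (cat_seq W _ us') ?_
    exact cat_congr (EqI.pga3 _ _) us'
  refine EqT.trans (EqT.extrCongr (EqI.seqCongr (EqI.refl _) (EqI.trans (habs Z) hC.symm))) ?_
  refine EqT.trans (h₁ l 0) ?_
  exact EqT.symm (EqT.extrCongr (EqI.seqCongr (EqI.refl _) (EqI.trans (habs' Z) hC'.symm)))

lemma first_arg {t₁ t₁' : ISTm A} (h₁ : BCong t₁ t₁') (Z : ISTm A) (l : ℕ) :
    EqT (.extr (.seq (.ins (jmp l)) (.seq t₁ Z)))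
      (.extr (.seq (.ins (jmp l)) (.seq t₁' Z))) := by
  have h₁' : BCong t₁' t₁ := fun l n => EqT.symm (h₁ l n)
  cases hA : toL t₁ with
  | none =>
    cases hB : toL t₁' with
    | none => exact first_arg_ii h₁ hA hB Z l
    | some L₂ => exact EqT.symm (first_arg_fi h₁' hB hA Z l)
  | some L₁ =>
    cases hB : toL t₁' with
    | none => exact first_arg_fi h₁ hA hB Z l
    | some L₂ => exact first_arg_ff h₁ hA hB Z l

lemma snd_arg : ∀ (t Y Y' : ISTm A),
    (∀ p, EqT (.extr (.seq (.ins (jmp p)) Y)) (.extr (.seq (.ins (jmp p)) Y'))) →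
    EqT (.extr (.seq t Y)) (.extr (.seq t Y')) ∧
    ∀ l, EqT (.extr (.seq (.ins (jmp l)) (.seq t Y)))
      (.extr (.seq (.ins (jmp l)) (.seq t Y'))) := by
  intro t
  induction t with
  | ins u =>
    intro Y Y' h
    have hY : EqT (.extr Y) (.extr Y') :=
      EqT.trans (EqT.symm (EqT.te9 Y)) (EqT.trans (h 1) (EqT.te9 Y'))
    have hfst : EqT (.extr (.seq (.ins u) Y)) (.extr (.seq (.ins u) Y')) := by
      cases u with
      | basic a =>
        exact EqT.trans (EqT.te2 a Y)
          (EqT.trans (EqT.pccCongr a hY hY) (EqT.symm (EqT.te2 a Y')))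
      | ptst a =>
        exact EqT.trans (EqT.te4 a Y)
          (EqT.trans (EqT.pccCongr a hY (h 2)) (EqT.symm (EqT.te4 a Y')))
      | ntst a =>
        exact EqT.trans (EqT.te6 a Y)
          (EqT.trans (EqT.pccCongr a (h 2) hY) (EqT.symm (EqT.te6 a Y')))
      | jmp k => exact h k
      | halt => exact EqT.trans (EqT.te13 Y) (EqT.symm (EqT.te13 Y'))
    refine ⟨hfst, ?_⟩
    rintro (_ | _ | l)
    · exact EqT.trans (EqT.te8 _) (EqT.symm (EqT.te8 _))
    · exact EqT.trans (EqT.te9 _) (EqT.trans hfst (EqT.symm (EqT.te9 _)))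
    · exact EqT.trans (EqT.te11 l u Y) (EqT.trans (h (l+1)) (EqT.symm (EqT.te11 l u Y')))
  | seq s u ihs ihu =>
    intro Y Y' h
    have hu := ihu Y Y' h
    have hs := ihs (.seq u Y) (.seq u Y') hu.2
    constructor
    · refine EqT.trans (EqT.extrCongr (EqI.pga1 s u Y)) ?_
      exact EqT.trans hs.1 (EqT.symm (EqT.extrCongr (EqI.pga1 s u Y')))
    · intro l
      refine EqT.trans (EqT.extrCongr (EqI.seqCongr (EqI.refl _) (EqI.pga1 s u Y))) ?_
      exact EqT.trans (hs.2 l)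
        (EqT.symm (EqT.extrCongr (EqI.seqCongr (EqI.refl _) (EqI.pga1 s u Y'))))
  | rep s ih =>
    intro Y Y' h
    constructor
    · exact EqT.trans (EqT.extrCongr (EqI.pga3 s Y))
        (EqT.symm (EqT.extrCongr (EqI.pga3 s Y')))
    · intro l
      exact EqT.trans (EqT.extrCongr (EqI.seqCongr (EqI.refl _) (EqI.pga3 s Y)))
        (EqT.symm (EqT.extrCongr (EqI.seqCongr (EqI.refl _) (EqI.pga3 s Y'))))

end PGAAux


/-- Behavioural congruence of closed PGA terms is a congruence with
respect to concatenation. -/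
theorem bcong_seq_congr {A : Type} {t₁ t₁' t₂ t₂' : ISTm A}
    (h₁ : BCong t₁ t₁') (h₂ : BCong t₂ t₂') :
    BCong (.seq t₁ t₂) (.seq t₁' t₂') := by
  intro l n
  have e₁ : EqI (appHalts (ISTm.seq t₁ t₂) n) (.seq t₁ (appHalts t₂ n)) := by
    cases n with
    | zero => exact EqI.refl _
    | succ m => exact EqI.pga1 t₁ t₂ (halts m)
  have e₂ : EqI (appHalts (ISTm.seq t₁' t₂') n) (.seq t₁' (appHalts t₂' n)) := by
    cases n with
    | zero => exact EqI.refl _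
    | succ m => exact EqI.pga1 t₁' t₂' (halts m)
  have hfa := PGAAux.first_arg h₁ (appHalts t₂ n) l
  have hsa := (PGAAux.snd_arg t₁' (appHalts t₂ n) (appHalts t₂' n) (fun p => h₂ p n)).2 l
  refine EqT.trans (EqT.extrCongr (EqI.seqCongr (EqI.refl _) e₁)) ?_
  refine EqT.trans hfa ?_
  refine EqT.trans hsa ?_
  exact EqT.symm (EqT.extrCongr (EqI.seqCongr (EqI.refl _) e₂))
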